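/- arXiv:1108.5406 — 12 statements merged into one kernel-verified Lean document; each statement's English description precedes it below -/
import Mathlib

section
/- For a positive integer n, every group with exactly n elements is cyclic if and only if n and φ(n) are coprime. -/
lemma aux_coprime_dvd {n d : ℕ} (hd : d ∣ n) (h : Nat.Coprime n n.totient) :
    Nat.Coprime d d.totient :=
  Nat.Coprime.coprime_dvd_left hd (Nat.Coprime.coprime_dvd_right (Nat.totient_dvd_of_dvd hd) h)

lemma aux_squarefree {n : ℕ} (hn : 0 < n) (h : Nat.Coprime n n.totient) : Squarefree n := by
  rw [Nat.squarefree_iff_prime_squarefree]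
  intro p hp hpp
  have hpn : p ∣ n := dvd_trans (dvd_mul_right p p) hpp
  have hptot : p ∣ n.totient := by
    have h2 : 2 ≤ n.factorization p := by
      rw [← Nat.Prime.pow_dvd_iff_le_factorization hp hn.ne']
      simpa [sq] using hpp
    rw [Nat.totient_eq_prod_factorization hn.ne', Finsupp.prod]
    refine dvd_trans ?_ (Finset.dvd_prod_of_mem _ (a := p) ?_)
    · exact dvd_mul_of_dvd_left (dvd_pow_self p (by omega)) _
    · rw [Nat.support_factorization, Nat.mem_primeFactors]
      exact ⟨hp, hpn, hn.ne'⟩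
  have : p ∣ Nat.gcd n n.totient := Nat.dvd_gcd hpn hptot
  rw [h] at this
  exact hp.one_lt.ne' (Nat.dvd_one.mp this)

-- decomposition of non-coprimality
lemma aux_decomp {n : ℕ} (hn : 0 < n) (h : ¬ Nat.Coprime n n.totient) :
    (∃ p, p.Prime ∧ p * p ∣ n) ∨
      (∃ p q, p.Prime ∧ q.Prime ∧ p * q ∣ n ∧ p ∣ q - 1) := by
  obtain ⟨p, hp, hpn, hptot⟩ := Nat.Prime.not_coprime_iff_dvd.mp h
  by_cases hsq : p * p ∣ n
  · exact Or.inl ⟨p, hp, hsq⟩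
  · right
    -- p ∣ totient n = prod over primeFactors of q^(k-1)*(q-1)
    rw [Nat.totient_eq_prod_factorization hn.ne', Finsupp.prod] at hptot
    obtain ⟨q, hq, hdvd⟩ := hp.prime.exists_mem_finset_dvd hptot
    rw [Nat.support_factorization, Nat.mem_primeFactors] at hq
    obtain ⟨hqp, hqn, -⟩ := hq
    rcases (Nat.Prime.dvd_mul hp).mp hdvd with h1 | h2
    · exfalso
      have hpq : p = q := (Nat.prime_dvd_prime_iff_eq hp hqp).mp (hp.dvd_of_dvd_pow h1)
      subst hpq
      have hf : 2 ≤ n.factorization p := by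
        by_contra hf
        have : n.factorization p - 1 = 0 := by omega
        rw [this, pow_zero, Nat.dvd_one] at h1
        exact hp.one_lt.ne' h1
      exact hsq (by
        have : p ^ 2 ∣ n := (Nat.Prime.pow_dvd_iff_le_factorization hp hn.ne').mpr hf
        simpa [sq] using this)
    · refine ⟨p, q, hp, hqp, ?_, h2⟩
      have hq1 : 0 < q - 1 := by have := hqp.two_le; omega
      have hpq : p ≠ q := by
        rintro rfl
        have := Nat.le_of_dvd hq1 h2
        omega
      exact Nat.Coprime.mul_dvd_of_dvd_of_dvd
        ((Nat.coprime_primes hp hqp).mpr hpq) hpn hqn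

lemma aux_wit_sq {n p : ℕ} (hn : 0 < n) (hp : p.Prime) (hpp : p * p ∣ n) :
    ∃ (G : Type) (_ : Group G) (_ : Fintype G), Fintype.card G = n ∧ ¬ IsCyclic G := by
  obtain ⟨m, rfl⟩ := hpp
  have hm : 0 < m := Nat.pos_of_ne_zero (by rintro rfl; simp at hn)
  have hp0 : 0 < p := hp.pos
  have : NeZero p := ⟨hp0.ne'⟩
  have : NeZero m := ⟨hm.ne'⟩
  refine ⟨Multiplicative (ZMod p × ZMod p × ZMod m), inferInstance, inferInstance, ?_, ?_⟩
  · simp [ZMod.card]; ring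
  · intro hcyc
    obtain ⟨g, hg⟩ := hcyc.exists_ofOrder_eq_natCard
    have hcard : Nat.card (Multiplicative (ZMod p × ZMod p × ZMod m)) = p * p * m := by
      simp [Nat.card_eq_fintype_card, ZMod.card]; ring
    have key : ∀ x : ZMod p × ZMod p × ZMod m, (p * m) • x = 0 := by
      intro ⟨a, b, c⟩
      have h1 : ((p * m : ℕ) : ZMod p) = 0 :=
        (ZMod.natCast_eq_zero_iff _ _).mpr (dvd_mul_right p m)
      have h2 : ((p * m : ℕ) : ZMod m) = 0 :=
        (ZMod.natCast_eq_zero_iff _ _).mpr (dvd_mul_left m p)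
      simp [Prod.ext_iff, nsmul_eq_mul, h1, h2]
    have hpow : g ^ (p * m) = 1 := by
      have := key g.toAdd
      rw [← ofAdd_toAdd g, ← ofAdd_nsmul, this]
      rfl
    have := orderOf_le_of_pow_eq_one (by positivity) hpow
    rw [hg, hcard] at this
    nlinarith [hp.two_le]

open SemidirectProduct

/-- AddAut A as MulAut of Multiplicative A -/
def addAutToMulAut (A : Type*) [AddGroup A] : Multiplicative (AddAut A) →* MulAut (Multiplicative A) where
  toFun f := AddEquiv.toMultiplicative (Multiplicative.toAdd f)
  map_one' := rfl
  map_mul' f g := rfl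

/-- equivalence of a semidirect product with the product type -/
def sdEquivProd {N G : Type*} [Group N] [Group G] (φ : G →* MulAut N) :
    (N ⋊[φ] G) ≃ N × G where
  toFun x := (x.left, x.right)
  invFun x := ⟨x.1, x.2⟩
  left_inv x := rfl
  right_inv x := rfl

lemma aux_wit_pq {n p q : ℕ} (hn : 0 < n) (hp : p.Prime) (hq : q.Prime)
    (hpq : p * q ∣ n) (hdvd : p ∣ q - 1) :
    ∃ (G : Type) (_ : Group G) (_ : Fintype G), Fintype.card G = n ∧ ¬ IsCyclic G := by
  obtain ⟨r, rfl⟩ := hpq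
  have hr : 0 < r := Nat.pos_of_ne_zero (by rintro rfl; simp at hn)
  have : NeZero q := ⟨hq.pos.ne'⟩
  have : NeZero r := ⟨hr.ne'⟩
  have : Fact p.Prime := ⟨hp⟩
  -- a unit of order p
  have hcardu : Fintype.card (ZMod q)ˣ = q - 1 := by
    rw [ZMod.card_units_eq_totient, Nat.totient_prime hq]
  obtain ⟨u, hu⟩ : ∃ u : (ZMod q)ˣ, orderOf u = p := by
    apply exists_prime_orderOf_dvd_card p
    rw [hcardu]; exact hdvd
  -- the action hom
  have hup : (p : ℤ) • Additive.ofMul u = 0 := by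
    have h1 : u ^ (p : ℤ) = 1 := by
      rw [zpow_natCast, ← hu, pow_orderOf_eq_one]
    rw [← ofMul_zpow, h1]
    rfl
  let F : ZMod p →+ Additive (ZMod q)ˣ :=
    ZMod.lift p ⟨zmultiplesHom _ (Additive.ofMul u), hup⟩
  let ψ : Multiplicative (ZMod p) →* MulAut (Multiplicative (ZMod q)) :=
    (addAutToMulAut (ZMod q)).comp
      (AddMonoidHom.toMultiplicative ((ZMod.AddAutEquivUnits q).symm.toAddMonoidHom.comp F))
  -- key: action of generator on generator
  have hψ : (ψ (Multiplicative.ofAdd 1)) (Multiplicative.ofAdd 1) =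
      Multiplicative.ofAdd (u.val * 1) := by
    have hF : F 1 = Additive.ofMul u := by
      have : ((1 : ℤ) : ZMod p) = (1 : ZMod p) := by push_cast; rfl
      rw [← this, ZMod.lift_coe]
      simp
    show (AddEquiv.toMultiplicative ((ZMod.AddAutEquivUnits q).symm (F 1)))
        (Multiplicative.ofAdd 1) = _
    rw [hF]
    rfl
  letI : Fintype (Multiplicative (ZMod q) ⋊[ψ] Multiplicative (ZMod p)) :=
    Fintype.ofEquiv _ (sdEquivProd ψ).symm
  refine ⟨(Multiplicative (ZMod q) ⋊[ψ] Multiplicative (ZMod p)) × Multiplicative (ZMod r),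
    inferInstance, inferInstance, ?_, ?_⟩
  · rw [Fintype.card_prod, Fintype.card_congr (sdEquivProd ψ), Fintype.card_prod]
    simp [ZMod.card]
    ring_nf
    exact Or.inl trivial
  · intro hcyc
    have hcomm : ∀ a b : (Multiplicative (ZMod q) ⋊[ψ] Multiplicative (ZMod p)) ×
        Multiplicative (ZMod r), a * b = b * a := fun a b => by
      letI := hcyc.commGroup; exact mul_comm a b
    have h1 := hcomm (inl (φ := ψ) (Multiplicative.ofAdd (1 : ZMod q)), 1) (inr (φ := ψ) (Multiplicative.ofAdd (1 : ZMod p)), 1)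
    rw [Prod.ext_iff] at h1
    have h2 : inl (φ := ψ) (Multiplicative.ofAdd (1 : ZMod q)) * inr (φ := ψ) (Multiplicative.ofAdd (1 : ZMod p)) =
        inr (φ := ψ) (Multiplicative.ofAdd (1 : ZMod p)) * inl (φ := ψ) (Multiplicative.ofAdd (1 : ZMod q)) := by
      simpa using h1.1
    have h3 : inr (φ := ψ) (Multiplicative.ofAdd (1 : ZMod p)) * inl (φ := ψ) (Multiplicative.ofAdd (1 : ZMod q)) =
        inl (φ := ψ) ((ψ (Multiplicative.ofAdd (1 : ZMod p))) (Multiplicative.ofAdd (1 : ZMod q))) *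
          inr (φ := ψ) (Multiplicative.ofAdd (1 : ZMod p)) := by
      rw [SemidirectProduct.inl_aut, map_inv, mul_assoc, mul_assoc, inv_mul_cancel, mul_one]
    rw [h3, hψ] at h2
    have h4 : (Multiplicative.ofAdd (1 : ZMod q)) = Multiplicative.ofAdd (u.val * 1) := by
      have := congrArg SemidirectProduct.left h2
      simpa using this
    have h5 : u.val = 1 := by
      have := congrArg Multiplicative.toAdd h4
      simpa using this.symm
    have : u = 1 := Units.ext (by simpa using h5)
    rw [this, orderOf_one] at hu
    exact hp.one_lt.ne hu


lemma aux_hom_trivial {A B : Type*} [Group A] [Group B] [Finite A] [Finite B]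
    (f : A →* B) (h : Nat.Coprime (Nat.card A) (Nat.card B)) : ∀ a, f a = 1 := by
  have h1 : Nat.card f.range ∣ Nat.card A :=
    Subgroup.card_dvd_of_surjective f.rangeRestrict f.rangeRestrict_surjective
  have h2 : Nat.card f.range ∣ Nat.card B := Subgroup.card_subgroup_dvd_card f.range
  have h3 : Nat.card f.range = 1 := Nat.eq_one_of_dvd_coprimes h h1 h2
  have h4 : f.range = ⊥ := Subgroup.eq_bot_of_card_eq _ h3
  intro a
  have : f a ∈ f.range := ⟨a, rfl⟩
  rw [h4, Subgroup.mem_bot] at this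
  exact this

lemma aux_hard : ∀ n : ℕ, 0 < n → Nat.Coprime n n.totient →
    ∀ (G : Type) (_ : Group G) (_ : Fintype G), Fintype.card G = n → IsCyclic G := by
  intro n
  induction n using Nat.strong_induction_on with
  | _ n IH =>
    intro hn hcop G _ _ hG
    rcases eq_or_lt_of_le (show 1 ≤ n from hn) with h1 | h1
    · have : Fintype.card G = 1 := by omega
      have := Fintype.card_le_one_iff_subsingleton.mp this.le
      exact isCyclic_of_subsingleton
    -- now 1 < n
    have hsf : Squarefree n := by
      rw [Nat.squarefree_iff_prime_squarefree]
      intro p hp hpp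
      have hpn : p ∣ n := dvd_trans (dvd_mul_right p p) hpp
      have hptot : p ∣ n.totient := by
        have h2 : 2 ≤ n.factorization p := by
          rw [← Nat.Prime.pow_dvd_iff_le_factorization hp hn.ne']
          simpa [sq] using hpp
        rw [Nat.totient_eq_prod_factorization hn.ne', Finsupp.prod]
        refine dvd_trans ?_ (Finset.dvd_prod_of_mem _ (a := p) ?_)
        · exact dvd_mul_of_dvd_left (dvd_pow_self p (by omega)) _
        · rw [Nat.support_factorization, Nat.mem_primeFactors]
          exact ⟨hp, hpn, hn.ne'⟩
      have := Nat.eq_one_of_dvd_coprimes hcop hpn hptot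
      exact hp.one_lt.ne' this
    set p := n.minFac with hpdef
    have hp : p.Prime := Nat.minFac_prime h1.ne'
    haveI : Fact p.Prime := ⟨hp⟩
    have hpn : p ∣ n := Nat.minFac_dvd n
    have hfin : Finite G := Fintype.finite ‹_›
    obtain ⟨P⟩ : Nonempty (Sylow p G) := inferInstance
    set Q : Subgroup G := (P : Subgroup G) with hQdef
    -- card of P is p
    have hfact : n.factorization p = 1 := by
      have hle : n.factorization p ≤ 1 := hsf.natFactorization_le_one p
      have hge : 0 < n.factorization p :=
        Nat.Prime.factorization_pos_of_dvd hp hn.ne' hpn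
      omega
    have hng : Nat.card G = n := by rw [Nat.card_eq_fintype_card, hG]
    have hcardQ : Nat.card Q = p := by
      have h := P.card_eq_multiplicity
      rw [hng, hfact, pow_one] at h
      exact h
    have hQcyc : IsCyclic Q := isCyclic_of_prime_card (p := p) hcardQ
    -- φ(p) = p - 1 divides totient n
    have hptotdvd : (p - 1) ∣ n.totient := by
      have := Nat.totient_prime hp ▸ Nat.totient_dvd_of_dvd hpn
      simpa using this
    -- N(P) ≤ C(P)
    have hAut : Nat.card (MulAut Q) = p - 1 := by
      rw [IsCyclic.card_mulAut, hcardQ, Nat.totient_prime hp]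
    have hP : Subgroup.normalizer (Q : Set G) ≤ Subgroup.centralizer (Q : Set G) := by
      have htriv := aux_hom_trivial Q.normalizerMonoidHom ?_
      · intro g hg
        have : (⟨g, hg⟩ : Subgroup.normalizer (Q : Set G)) ∈ Q.normalizerMonoidHom.ker := htriv _
        rw [Subgroup.normalizerMonoidHom_ker, Subgroup.mem_subgroupOf] at this
        exact this
      · rw [hAut]
        have hnd : Nat.card (Subgroup.normalizer (Q : Set G)) ∣ n := by
          rw [← hG, ← Nat.card_eq_fintype_card]
          exact Subgroup.card_subgroup_dvd_card _
        exact Nat.Coprime.coprime_dvd_left hnd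
          (Nat.Coprime.coprime_dvd_right hptotdvd hcop)
    -- Burnside
    have hcompl := MonoidHom.ker_transferSylow_isComplement' P hP
    set K : Subgroup G := (MonoidHom.transferSylow P hP).ker with hKdef
    haveI : K.Normal := MonoidHom.normal_ker _
    have hmul : Nat.card K * p = n := by
      have := hcompl.card_mul
      rw [hcardQ] at this
      rw [this, hng]
    set m := Nat.card K with hmdef
    have hm : 0 < m := Nat.card_pos
    have hmn : m ∣ n := ⟨p, hmul.symm⟩
    have hmltn : m < n := by nlinarith [hp.two_le]
    -- K cyclic by induction
    haveI : Fintype K := Fintype.ofFinite K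
    have hKcyc : IsCyclic K := IH m hmltn hm (aux_coprime_dvd hmn hcop) K inferInstance
      inferInstance (by rw [← Nat.card_eq_fintype_card])
    -- conjugation action of Q on K is trivial
    have hco_p_phi : Nat.Coprime p (m.totient) :=
      Nat.Coprime.coprime_dvd_left hpn
        (Nat.Coprime.coprime_dvd_right (Nat.totient_dvd_of_dvd hmn) hcop)
    have htrivact := aux_hom_trivial ((MulAut.conjNormal (H := K)).comp Q.subtype) ?_
    swap
    · rw [hcardQ, IsCyclic.card_mulAut]
      exact hco_p_phi
    have hcomm : ∀ (x : Q) (k : K), Commute (k : G) (x : G) := by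
      intro x k
      have := htrivact x
      have h5 : MulAut.conjNormal (x : G) k = k := by
        rw [MonoidHom.comp_apply] at this
        rw [Subgroup.coe_subtype] at this
        rw [this]; rfl
      have h6 : (x : G) * (k : G) * (x : G)⁻¹ = (k : G) := by
        have := congrArg (Subtype.val) h5
        rwa [MulAut.conjNormal_apply] at this
      have : (k : G) * (x : G) = (x : G) * (k : G) := by
        calc (k : G) * (x : G) = ((x : G) * (k : G) * (x : G)⁻¹) * (x:G) := by rw [h6]
        _ = (x : G) * (k : G) := by group
      exact this
    -- generators
    obtain ⟨k, hk⟩ := hKcyc.exists_ofOrder_eq_natCard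
    obtain ⟨g, hg⟩ := hQcyc.exists_ofOrder_eq_natCard
    have hok : orderOf (k : G) = m := by
      rw [Subgroup.orderOf_coe, hk]
    have hog : orderOf (g : G) = p := by
      rw [Subgroup.orderOf_coe, hg, hcardQ]
    have hcomp : Nat.Coprime m p := by
      have : Squarefree (m * p) := hmul ▸ hsf
      exact (Nat.squarefree_mul_iff.mp this).1
    have horder : orderOf ((k : G) * (g : G)) = n := by
      rw [Commute.orderOf_mul_eq_mul_orderOf_of_coprime (hcomm g k)
        (by rw [hok, hog]; exact hcomp), hok, hog, hmul]
    exact isCyclic_of_orderOf_eq_card _ (by rw [horder, hng])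


/-- For a positive integer `n`, every group with exactly `n` elements is cyclic
if and only if `n` and `φ(n)` are coprime. -/
theorem every_group_of_card_cyclic_iff_coprime_totient (n : ℕ) (hn : 0 < n) :
    (∀ (G : Type) (_ : Group G) (_ : Fintype G), Fintype.card G = n → IsCyclic G) ↔
      Nat.Coprime n (Nat.totient n) := by
  constructor
  · intro h
    by_contra hnc
    obtain ⟨p, hp, hpp⟩ | ⟨p, q, hp, hq, hpq, hdvd⟩ := aux_decomp hn hnc
    · obtain ⟨G, _, _, hcard, hnotcyc⟩ := aux_wit_sq hn hp hpp
      exact hnotcyc (h G ‹_› ‹_› hcard)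
    · obtain ⟨G, _, _, hcard, hnotcyc⟩ := aux_wit_pq hn hp hq hpq hdvd
      exact hnotcyc (h G ‹_› ‹_› hcard)
  · intro h G _ _ hG
    exact aux_hard n hn h G ‹_› ‹_› hG
end

section
/- If n is a positive integer such that n and φ(n) are coprime, then every group with exactly n elements is cyclic. -/
open Subgroup

private lemma squarefree_of_coprime_totient' {n : ℕ}
    (h : Nat.Coprime n (Nat.totient n)) : Squarefree n := by
  rcases Nat.eq_zero_or_pos n with rfl | hn
  · simp at h
  rw [Nat.squarefree_iff_prime_squarefree]
  intro p hp hdvd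
  have h1 : p ∣ Nat.totient n := by
    have h3 : Nat.totient (p ^ 2) ∣ Nat.totient n := Nat.totient_dvd_of_dvd (by rwa [sq])
    have h2 : p ∣ Nat.totient (p ^ 2) := by
      rw [Nat.totient_prime_pow hp (by norm_num)]
      simp
    exact h2.trans h3
  have h2 : p ∣ n := dvd_trans (dvd_mul_left p p) hdvd
  have hd := Nat.dvd_gcd h2 h1
  rw [Nat.Coprime] at h
  rw [h, Nat.dvd_one] at hd
  exact hp.one_lt.ne' hd

private lemma apply_eq_one_of_range_bot {A B : Type*} [Group A] [Group B]
    (f : A →* B) (h : f.range = ⊥) (x : A) : f x = 1 := by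
  have : f x ∈ f.range := ⟨x, rfl⟩
  rw [h, Subgroup.mem_bot] at this
  exact this

private lemma aux_cyclic_of_coprime_totient :
    ∀ n : ℕ, ∀ (G : Type) [Group G] [Finite G], Nat.card G = n →
    Nat.Coprime n (Nat.totient n) → IsCyclic G := by
  intro n
  induction n using Nat.strong_induction_on with
  | _ n ih =>
  intro G _ _ hcard hcop
  have hn1 : 1 ≤ n := hcard ▸ Nat.card_pos
  rcases eq_or_lt_of_le hn1 with hn1 | hn2
  · haveI : Subsingleton G :=
      (Nat.card_eq_one_iff_unique.mp (hcard.trans hn1.symm)).1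
    exact isCyclic_of_subsingleton
  -- now n ≥ 2
  set p := n.minFac with hp_def
  have hp : p.Prime := Nat.minFac_prime (by omega)
  haveI : Fact p.Prime := ⟨hp⟩
  have hsf : Squarefree n := squarefree_of_coprime_totient' hcop
  have hpn : p ∣ n := Nat.minFac_dvd n
  have P : Sylow p G := Classical.arbitrary _
  have hcardP : Nat.card P = p := by
    rw [Sylow.card_eq_multiplicity, hcard]
    have h1 : n.factorization p ≤ 1 :=
      (Nat.squarefree_iff_factorization_le_one (by omega)).mp hsf p
    have h2 : 1 ≤ n.factorization p :=
      (Nat.Prime.factorization_pos_of_dvd hp (by omega) hpn)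
    rw [le_antisymm h1 h2, pow_one]
  haveI : IsCyclic (P : Subgroup G) := isCyclic_of_prime_card hcardP
  -- normalizer ≤ centralizer
  have hP : normalizer (P : Set G) ≤ centralizer (P : Set G) := by
    set f := (P : Subgroup G).normalizerMonoidHom with hf_def
    have hrange1 : Nat.card f.range = 1 := by
      have hd1 : Nat.card f.range ∣ p - 1 := by
        have h4 : Nat.card f.range ∣ Nat.card (MulAut (P : Subgroup G)) :=
          card_subgroup_dvd_card f.range
        rwa [IsCyclic.card_mulAut, hcardP, Nat.totient_prime hp] at h4
      have hd2 : Nat.card f.range ∣ n := by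
        have h3 : Nat.card f.range ∣ Nat.card (normalizer (P : Set G)) :=
          card_dvd_of_surjective f.rangeRestrict f.rangeRestrict_surjective
        exact h3.trans (hcard ▸ card_subgroup_dvd_card _)
      have hd3 : (p - 1) ∣ Nat.totient n := by
        have := Nat.totient_dvd_of_dvd hpn
        rwa [Nat.totient_prime hp] at this
      exact Nat.eq_one_of_dvd_coprimes hcop hd2 (hd1.trans hd3)
    have hbot : f.range = ⊥ := Subgroup.eq_bot_of_card_eq f.range hrange1
    intro x hx
    have h5 : f ⟨x, hx⟩ = 1 := apply_eq_one_of_range_bot f hbot _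
    have h6 : (⟨x, hx⟩ : normalizer (P : Set G)) ∈ f.ker := h5
    rw [hf_def, normalizerMonoidHom_ker, mem_subgroupOf] at h6
    exact h6
  -- Burnside: normal p-complement
  set K := (MonoidHom.transferSylow P hP).ker with hK_def
  have hcomp : IsComplement' K (P : Subgroup G) :=
    MonoidHom.ker_transferSylow_isComplement' P hP
  set m := n / p with hm_def
  have hmp : m * p = n := Nat.div_mul_cancel hpn
  have hm_dvd : m ∣ n := ⟨p, hmp.symm⟩
  have hm0 : 0 < m := Nat.div_pos (Nat.minFac_le (by omega)) hp.pos
  have hcardK : Nat.card K = m := by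
    have h7 := hcomp.card_mul
    rw [hcardP, hcard] at h7
    exact Nat.eq_of_mul_eq_mul_right hp.pos (by rw [hmp]; exact h7)
  have hcop_m : Nat.Coprime m (Nat.totient m) :=
    Nat.Coprime.coprime_dvd_right (Nat.totient_dvd_of_dvd hm_dvd)
      (Nat.Coprime.coprime_dvd_left hm_dvd hcop)
  have hm_lt : m < n := by
    have h8 : 2 ≤ p := hp.two_le
    have h9 : m * 2 ≤ m * p := Nat.mul_le_mul le_rfl h8
    omega
  haveI hKcyc : IsCyclic K := ih m hm_lt K hcardK hcop_m
  -- K ≤ center G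
  have hKcenter : (K : Subgroup G) ≤ center G := by
    have hbot : (MulAut.conjNormal (H := K) : G →* MulAut K).range = ⊥ := by
      apply Subgroup.eq_bot_of_card_eq
      have hd1 : Nat.card (MulAut.conjNormal (H := K) : G →* MulAut K).range ∣ n :=
        hcard ▸ card_dvd_of_surjective _ (MonoidHom.rangeRestrict_surjective _)
      have hd2 : Nat.card (MulAut.conjNormal (H := K) : G →* MulAut K).range ∣
          Nat.totient n := by
        have h4 : Nat.card (MulAut.conjNormal (H := K) : G →* MulAut K).range ∣
            Nat.card (MulAut K) := card_subgroup_dvd_card _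
        rw [IsCyclic.card_mulAut, hcardK] at h4
        exact h4.trans (Nat.totient_dvd_of_dvd hm_dvd)
      exact Nat.eq_one_of_dvd_coprimes hcop hd1 hd2
    intro k hk
    rw [Subgroup.mem_center_iff]
    intro g
    have h9 : (MulAut.conjNormal (H := K) : G →* MulAut K) g = 1 :=
      apply_eq_one_of_range_bot _ hbot g
    have h10 : ((MulAut.conjNormal (H := K) : G →* MulAut K) g) ⟨k, hk⟩ = ⟨k, hk⟩ := by
      rw [h9]; rfl
    have h5 : g * k * g⁻¹ = k := by
      have := congrArg Subtype.val h10
      simpa [MulAut.conjNormal_apply] using this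
    calc g * k = (g * k * g⁻¹) * g := by group
      _ = k * g := by rw [h5]
  -- G ⧸ center is cyclic of order dividing p, hence G is commutative
  have hcomm : ∀ a b : G, a * b = b * a := by
    have hq : Nat.card (G ⧸ center G) ∣ p := by
      have h6 := Subgroup.card_eq_card_quotient_mul_card_subgroup (center G)
      have h7 : m ∣ Nat.card (center G) := hcardK ▸ card_dvd_of_le hKcenter
      obtain ⟨t, ht⟩ := h7
      rw [hcard, ht] at h6
      refine ⟨t, ?_⟩
      have h11 : m * p = m * (Nat.card (G ⧸ center G) * t) := by
        rw [hmp, h6]; ring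
      exact Nat.eq_of_mul_eq_mul_left hm0 h11
    haveI : IsCyclic (G ⧸ center G) := isCyclic_of_card_dvd_prime hq
    exact commutative_of_cyclic_center_quotient (QuotientGroup.mk' (center G))
      (by rw [QuotientGroup.ker_mk'])
  -- finish: element of order p times element of order m
  obtain ⟨g, hg⟩ := exists_prime_orderOf_dvd_card' p (hcard ▸ hpn)
  obtain ⟨k, hkgen⟩ := hKcyc.exists_generator
  have hok : orderOf (k : G) = m := by
    have h13 := orderOf_injective K.subtype K.subtype_injective k
    rw [show K.subtype k = (k : G) from rfl] at h13
    rw [h13, orderOf_eq_card_of_forall_mem_zpowers hkgen, hcardK]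
  have hcop_pm : Nat.Coprime p m := by
    have h12 := (Nat.squarefree_mul_iff).mp (by rw [hmp]; exact hsf)
    exact h12.1.symm
  have horder : orderOf (g * (k : G)) = n := by
    rw [Commute.orderOf_mul_eq_mul_orderOf_of_coprime (hcomm g k)
      (by rw [hg, hok]; exact hcop_pm), hg, hok, mul_comm]
    exact hmp
  exact isCyclic_of_orderOf_eq_card _ (by rw [horder, hcard])

/-- If `n` is a positive integer such that `n` and `φ(n)` are coprime, then every
group with exactly `n` elements is cyclic. -/
theorem isCyclic_of_coprime_totient (n : ℕ) (hn : 0 < n)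
    (hcop : Nat.Coprime n (Nat.totient n))
    (G : Type) [Group G] [Fintype G] (hG : Fintype.card G = n) :
    IsCyclic G := by
  exact aux_cyclic_of_coprime_totient n G (by rw [Nat.card_eq_fintype_card, hG]) hcop
end

section
/- If n is a positive integer such that n and φ(n) are NOT coprime, then there exists a group with exactly n elements that is not cyclic. -/
/-- Number theory: if a prime `p` divides `φ(n)`, then `p^2 ∣ n` or some prime
`q ∣ n` has `p ∣ q - 1`. -/
lemma aux_dvd_totient (p : ℕ) (hp : p.Prime) :
    ∀ n, 0 < n → p ∣ Nat.totient n →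
      p ^ 2 ∣ n ∨ ∃ q, q.Prime ∧ q ∣ n ∧ p ∣ q - 1 := by
  intro n
  induction n using Nat.strong_induction_on with
  | _ n ih =>
    intro hn hpd
    rcases eq_or_lt_of_le (show 1 ≤ n by omega) with h1 | h1
    · subst h1
      rw [Nat.totient_one] at hpd
      exact absurd (Nat.dvd_one.mp hpd) hp.ne_one
    have hn1 : n ≠ 1 := by omega
    set q := n.minFac with hq
    have hqp : q.Prime := Nat.minFac_prime hn1
    have hqd : q ∣ n := Nat.minFac_dvd n
    set e := n.factorization q with he
    have he1 : 1 ≤ e := (Nat.Prime.factorization_pos_of_dvd hqp hn.ne' hqd)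
    have hqe : q ^ e ∣ n := Nat.ordProj_dvd n q
    set m := n / q ^ e with hm
    have hnd : ¬ q ∣ m := Nat.not_dvd_ordCompl hqp hn.ne'
    have hmul : q ^ e * m = n := Nat.ordProj_mul_ordCompl_eq_self n q
    have hm0 : 0 < m := Nat.ordCompl_pos q hn.ne'
    have hcop : Nat.Coprime (q ^ e) m :=
      Nat.Coprime.pow_left _ ((Nat.Prime.coprime_iff_not_dvd hqp).2 hnd)
    have htot : Nat.totient n = (q ^ (e - 1) * (q - 1)) * Nat.totient m := by
      rw [← hmul, Nat.totient_mul hcop, Nat.totient_prime_pow hqp he1]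
    rw [htot] at hpd
    rcases (Nat.Prime.dvd_mul hp).1 hpd with h | h
    · rcases (Nat.Prime.dvd_mul hp).1 h with h2 | h2
      · have hpq : p = q := (Nat.prime_dvd_prime_iff_eq hp hqp).1
          (hp.dvd_of_dvd_pow h2)
        have he2 : 2 ≤ e := by
          by_contra hc
          have he' : e = 1 := by omega
          rw [he'] at h2
          simp at h2
          exact hp.ne_one h2
        left
        calc p ^ 2 = q ^ 2 := by rw [hpq]
        _ ∣ q ^ e := pow_dvd_pow q he2
        _ ∣ n := hqe
      · exact Or.inr ⟨q, hqp, hqd, h2⟩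
    · have hmlt : m < n := by
        have h2e : 2 ≤ q ^ e := le_trans hqp.two_le (Nat.le_self_pow (by omega) q)
        calc m < 2 * m := by omega
        _ ≤ q ^ e * m := Nat.mul_le_mul_right m h2e
        _ = n := hmul
      rcases ih m hmlt hm0 h with h3 | ⟨r, hr1, hr2, hr3⟩
      · exact Or.inl (h3.trans (hmul ▸ Dvd.intro_left _ rfl))
      · exact Or.inr ⟨r, hr1, hr2.trans (hmul ▸ Dvd.intro_left _ rfl), hr3⟩

/-- A product with a noncyclic first factor is noncyclic. -/
lemma aux_not_isCyclic_prod {H K : Type} [Group H] [Group K]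
    (h : ¬ IsCyclic H) : ¬ IsCyclic (H × K) := fun hc =>
  h (isCyclic_of_surjective (MonoidHom.fst H K) Prod.fst_surjective)

/-- `ZMod p × ZMod p` is not cyclic (as a multiplicative group). -/
lemma aux_not_isCyclic_zmod_sq (p : ℕ) [Fact p.Prime] :
    ¬ IsCyclic (Multiplicative (ZMod p × ZMod p)) := by
  intro hc
  have hp := (Fact.out : p.Prime)
  have hcard : Nat.card (Multiplicative (ZMod p × ZMod p)) = p * p := by
    simp [Nat.card_eq_fintype_card, Fintype.card_prod, ZMod.card]
  have hexp : Monoid.exponent (Multiplicative (ZMod p × ZMod p)) ∣ p := by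
    apply Monoid.exponent_dvd_of_forall_pow_eq_one
    intro g
    have : p • (Multiplicative.toAdd g) = 0 := by
      rcases Multiplicative.toAdd g with ⟨a, b⟩
      ext <;> simp [nsmul_eq_mul, ZMod.natCast_self]
    rw [← ofAdd_toAdd g, ← ofAdd_nsmul, this]
    rfl
  have h1 := hc.exponent_eq_card
  rw [hcard] at h1
  have h2 : p * p ∣ p := h1 ▸ hexp
  have := Nat.le_of_dvd hp.pos h2
  nlinarith [hp.two_le]

/-- Convert additive automorphisms to multiplicative automorphisms of the type tag. -/
def auxAddAutToMulAut (A : Type) [AddGroup A] : Multiplicative (AddAut A) →* MulAut (Multiplicative A) where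
  toFun f := AddEquiv.toMultiplicative f.toAdd
  map_one' := rfl
  map_mul' _ _ := rfl

/-- If `p ∣ q - 1` for primes `p, q`, there is a nonabelian group of order `q * p`. -/
lemma aux_semidirect (p q : ℕ) [hp : Fact p.Prime] [hq : Fact q.Prime]
    (hdvd : p ∣ q - 1) :
    ∃ (G : Type) (_ : Group G) (_ : Fintype G), Fintype.card G = q * p ∧
      ∃ a b : G, a * b ≠ b * a := by
  have hcard : Fintype.card (ZMod q)ˣ = q - 1 := by
    rw [ZMod.card_units_eq_totient, Nat.totient_prime hq.out]
  obtain ⟨u, hu⟩ := exists_prime_orderOf_dvd_card p (hcard ▸ hdvd)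
  -- the homomorphism `ZMod p →+ Additive (ZMod q)ˣ` sending 1 to u
  have hker : (zmultiplesHom (Additive (ZMod q)ˣ) (Additive.ofMul u)) (p : ℤ) = 0 := by
    simp only [zmultiplesHom_apply]
    rw [← ofMul_zpow]
    norm_cast
    rw [← hu, pow_orderOf_eq_one]
    rfl
  let f0 : ZMod p →+ Additive (ZMod q)ˣ := ZMod.lift p ⟨_, hker⟩
  let f : Multiplicative (ZMod p) →* (ZMod q)ˣ := AddMonoidHom.toMultiplicativeLeft f0
  let φ : Multiplicative (ZMod p) →* MulAut (Multiplicative (ZMod q)) :=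
    (auxAddAutToMulAut (ZMod q)).comp
      ((DistribMulAction.toAddAut (ZMod q)ˣ (ZMod q)).comp f)
  let e : (Multiplicative (ZMod q) × Multiplicative (ZMod p)) ≃
      (Multiplicative (ZMod q) ⋊[φ] Multiplicative (ZMod p)) :=
    { toFun := fun x => ⟨x.1, x.2⟩
      invFun := fun x => (x.left, x.right)
      left_inv := fun _ => rfl
      right_inv := fun _ => rfl }
  letI fin : Fintype (Multiplicative (ZMod q) ⋊[φ] Multiplicative (ZMod p)) :=
    Fintype.ofEquiv _ e
  refine ⟨Multiplicative (ZMod q) ⋊[φ] Multiplicative (ZMod p), inferInstance, fin, ?_, ?_⟩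
  · rw [← Fintype.card_congr e]
    simp [ZMod.card]
  · -- noncommuting elements
    refine ⟨SemidirectProduct.inl (Multiplicative.ofAdd (1 : ZMod q)),
      SemidirectProduct.inr (Multiplicative.ofAdd (1 : ZMod p)), ?_⟩
    intro hcomm
    have h1 := congrArg SemidirectProduct.left hcomm
    simp only [SemidirectProduct.mul_left, SemidirectProduct.left_inl,
      SemidirectProduct.left_inr, SemidirectProduct.right_inl, SemidirectProduct.right_inr,
      map_one, MulAut.one_apply, mul_one, one_mul] at h1
    -- h1 : ofAdd 1 = φ (ofAdd 1) (ofAdd 1)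
    have hval : φ (Multiplicative.ofAdd (1 : ZMod p)) (Multiplicative.ofAdd (1 : ZMod q))
        = Multiplicative.ofAdd ((u : ZMod q) * 1) := by
      have h1cast : (1 : ZMod p) = ((1 : ℤ) : ZMod p) := by norm_cast
      show Multiplicative.ofAdd ((f (Multiplicative.ofAdd (1 : ZMod p))) •
        ((Multiplicative.ofAdd (1 : ZMod q)).toAdd)) = _
      congr 1
      have : f (Multiplicative.ofAdd (1 : ZMod p)) = u := by
        show Additive.toMul (f0 (1 : ZMod p)) = u
        rw [h1cast]
        show Additive.toMul (ZMod.lift p ⟨_, hker⟩ (((1:ℤ) : ZMod p))) = u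
        rw [ZMod.lift_coe]
        simp
      rw [this]
      simp [Units.smul_def]
    rw [hval] at h1
    have : (1 : ZMod q) = (u : ZMod q) * 1 := by exact_mod_cast congrArg Multiplicative.toAdd h1
    rw [mul_one] at this
    have hu1 : u = 1 := Units.ext this.symm
    rw [hu1, orderOf_one] at hu
    exact hp.out.ne_one hu.symm

/-- A group with noncommuting elements is not cyclic. -/
lemma aux_not_isCyclic_of_noncomm {G : Type} [Group G] (a b : G) (h : a * b ≠ b * a) :
    ¬ IsCyclic G := fun hc => h (letI := hc; (IsCyclic.commGroup).mul_comm a b)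

/-- If `n` is a positive integer such that `n` and `φ(n)` are not coprime, then
there exists a group with exactly `n` elements that is not cyclic. -/
theorem exists_noncyclic_group_of_not_coprime_totient (n : ℕ) (hn : 0 < n)
    (hcop : ¬ Nat.Coprime n (Nat.totient n)) :
    ∃ (G : Type) (_ : Group G) (_ : Fintype G), Fintype.card G = n ∧ ¬ IsCyclic G := by
  set p := (Nat.gcd n (Nat.totient n)).minFac with hp
  have hpp : p.Prime := Nat.minFac_prime hcop
  have hpn : p ∣ n := (Nat.minFac_dvd _).trans (Nat.gcd_dvd_left _ _)
  have hpt : p ∣ Nat.totient n := (Nat.minFac_dvd _).trans (Nat.gcd_dvd_right _ _)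
  haveI : Fact p.Prime := ⟨hpp⟩
  rcases aux_dvd_totient p hpp n hn hpt with hsq | ⟨q, hq, hqn, hpq1⟩
  · -- case p^2 ∣ n
    set m := n / p ^ 2 with hmdef
    have hm : p ^ 2 * m = n := Nat.mul_div_cancel' hsq
    have hm0 : 0 < m := by
      rcases Nat.eq_zero_or_pos m with h | h
      · rw [h, mul_zero] at hm; omega
      · exact h
    haveI : NeZero m := ⟨hm0.ne'⟩
    refine ⟨Multiplicative (ZMod p × ZMod p) × Multiplicative (ZMod m), inferInstance,
      inferInstance, ?_, ?_⟩
    · simp only [Fintype.card_prod, Fintype.card_multiplicative, ZMod.card]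
      rw [← hm]; ring
    · exact aux_not_isCyclic_prod (aux_not_isCyclic_zmod_sq p)
  · -- case q prime, q ∣ n, p ∣ q - 1
    haveI : Fact q.Prime := ⟨hq⟩
    have hne : p ≠ q := by
      intro h
      have h2 : 2 ≤ p := hpp.two_le
      have h3 : p ≤ q - 1 := Nat.le_of_dvd (by have := hq.two_le; omega) hpq1
      omega
    have hpqn : p * q ∣ n :=
      Nat.Coprime.mul_dvd_of_dvd_of_dvd ((Nat.coprime_primes hpp hq).2 hne) hpn hqn
    set m := n / (p * q) with hmdef
    have hm : p * q * m = n := Nat.mul_div_cancel' hpqn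
    have hm0 : 0 < m := by
      rcases Nat.eq_zero_or_pos m with h | h
      · rw [h, mul_zero] at hm; omega
      · exact h
    haveI : NeZero m := ⟨hm0.ne'⟩
    obtain ⟨G0, g0, f0, hc0, a, b, hab⟩ := aux_semidirect p q hpq1
    refine ⟨G0 × Multiplicative (ZMod m), inferInstance, inferInstance, ?_, ?_⟩
    · simp only [Fintype.card_prod, Fintype.card_multiplicative, ZMod.card, hc0]
      rw [← hm]; ring
    · exact aux_not_isCyclic_prod (aux_not_isCyclic_of_noncomm a b hab)
end

section
/- For a positive integer n, the numbers n and φ(n) are coprime if and only if n is squarefree and for all primes p and q dividing n, p does not divide q − 1. -/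
/-- For a positive integer `n`, the numbers `n` and `φ(n)` are coprime if and only if
`n` is squarefree and for all primes `p` and `q` dividing `n`, `p` does not divide `q - 1`. -/
theorem coprime_totient_iff (n : ℕ) (hn : 0 < n) :
    Nat.Coprime n (Nat.totient n) ↔
      Squarefree n ∧
        ∀ p q : ℕ, p.Prime → q.Prime → p ∣ n → q ∣ n → ¬ p ∣ (q - 1) := by
  constructor
  · intro h
    have key : ∀ p : ℕ, p.Prime → p ∣ n → p ∣ Nat.totient n → False := by
      intro p hp h1 h2
      have : p ∣ 1 := h ▸ Nat.dvd_gcd h1 h2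
      exact hp.one_lt.ne' (Nat.dvd_one.mp this)
    constructor
    · rw [Nat.squarefree_iff_prime_squarefree]
      intro p hp hpn
      refine key p hp (dvd_trans (dvd_mul_right p p) hpn) ?_
      have : p ∣ Nat.totient (p * p) := by
        rw [← sq, Nat.totient_prime_pow hp (by norm_num)]
        simp
      exact this.trans (Nat.totient_dvd_of_dvd hpn)
    · intro p q hp hq hpn hqn hpq
      refine key p hp hpn ?_
      have : (q - 1) ∣ Nat.totient n := by
        rw [← Nat.totient_prime hq]
        exact Nat.totient_dvd_of_dvd hqn
      exact hpq.trans this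
  · rintro ⟨hsf, hcond⟩
    by_contra hc
    rw [Nat.Prime.not_coprime_iff_dvd] at hc
    obtain ⟨p, hp, hpn, hpt⟩ := hc
    rw [Nat.totient_eq_prod_factorization hn.ne'] at hpt
    rw [Finsupp.prod] at hpt
    obtain ⟨q, hq, hdvd⟩ := hp.prime.exists_mem_finset_dvd hpt
    have hqmem : q ∈ n.primeFactors := by rwa [Nat.support_factorization] at hq
    have hqp : q.Prime := Nat.prime_of_mem_primeFactors hqmem
    have hqn : q ∣ n := Nat.dvd_of_mem_primeFactors hqmem
    have hk : n.factorization q = 1 := by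
      have h1 := (Nat.squarefree_iff_factorization_le_one hn.ne').mp hsf q
      have h0 : n.factorization q ≠ 0 := Finsupp.mem_support_iff.mp hq
      omega
    rw [hk] at hdvd
    simp at hdvd
    exact hcond p q hp hqp hpn hqn hdvd
end

section
/- Let p and q be primes with p dividing q − 1, and let n be a positive integer divisible by p·q. Then there exists a group with exactly n elements that is not cyclic. -/
open SemidirectProduct in
/-- equiv to product type -/
def sdpEquiv {N G : Type} [Group N] [Group G] (φ : G →* MulAut N) :
    (N ⋊[φ] G) ≃ N × G where
  toFun x := (x.left, x.right)
  invFun x := ⟨x.1, x.2⟩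
  left_inv x := rfl
  right_inv x := rfl

/-- Let `p` and `q` be primes with `p` dividing `q - 1`, and let `n` be a positive integer
divisible by `p * q`. Then there exists a group with exactly `n` elements that is not cyclic. -/
theorem exists_noncyclic_group_of_pq_dvd (p q n : ℕ) (hp : p.Prime) (hq : q.Prime)
    (hdvd : p ∣ q - 1) (hn : 0 < n) (hpq : p * q ∣ n) :
    ∃ (G : Type) (_ : Group G) (_ : Fintype G), Fintype.card G = n ∧ ¬ IsCyclic G := by
  haveI : Fact q.Prime := ⟨hq⟩
  haveI : Fact p.Prime := ⟨hp⟩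
  -- find u of order p
  obtain ⟨g, hg⟩ := IsCyclic.exists_ofOrder_eq_natCard (α := (ZMod q)ˣ)
  have hcard : Nat.card (ZMod q)ˣ = q - 1 := by
    simp [Nat.card_eq_fintype_card, ZMod.card_units_eq_totient, Nat.totient_prime hq]
  have hq1 : q - 1 ≠ 0 := by
    have := hq.two_le; omega
  set u : (ZMod q)ˣ := g ^ ((q - 1) / p) with hu_def
  have hu : orderOf u = p := by
    rw [hu_def, orderOf_pow, hg, hcard, Nat.gcd_eq_right (Nat.div_dvd_of_dvd hdvd),
      Nat.div_div_self hdvd hq1]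
  -- the monoid hom F
  let F : (ZMod q)ˣ →* MulAut (Multiplicative (ZMod q)) :=
    { toFun := fun v => AddEquiv.toMultiplicative (DistribMulAction.toAddAut (ZMod q)ˣ (ZMod q) v)
      map_one' := by
        ext x
        show Multiplicative.ofAdd ((1:(ZMod q)ˣ) • x.toAdd) = x
        simp
      map_mul' := by
        intro a b
        ext x
        show Multiplicative.ofAdd ((a * b) • x.toAdd) = _
        rw [mul_smul]
        rfl }
  have hFup : (F u) ^ p = 1 := by
    rw [← map_pow, ← hu, pow_orderOf_eq_one, map_one]
  -- the hom ψ from Multiplicative (ZMod p)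
  have hlift : (zmultiplesHom (Additive (MulAut (Multiplicative (ZMod q))))
      (Additive.ofMul (F u))) (p : ℤ) = 0 := by
    simp only [zmultiplesHom_apply]
    rw [← ofMul_zpow]
    rw [zpow_natCast, hFup]
    rfl
  let ψ : Multiplicative (ZMod p) →* MulAut (Multiplicative (ZMod q)) :=
    AddMonoidHom.toMultiplicativeLeft
      (ZMod.lift p ⟨zmultiplesHom _ (Additive.ofMul (F u)), hlift⟩)
  -- key: ψ at (ofAdd 1) is F u
  have hψ1 : ψ (Multiplicative.ofAdd (1 : ZMod p)) = F u := by
    show Additive.toMul ((ZMod.lift p ⟨zmultiplesHom _ (Additive.ofMul (F u)), hlift⟩) (1 : ZMod p)) = F u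
    rw [show ((1 : ZMod p)) = ((1 : ℤ) : ZMod p) by push_cast; rfl, ZMod.lift_coe]
    simp
  -- the groups
  set m := n / (p * q) with hm_def
  have hm : p * q * m = n := Nat.mul_div_cancel' hpq
  have hm0 : m ≠ 0 := by
    intro h0
    rw [h0, mul_zero] at hm
    omega
  haveI : NeZero m := ⟨hm0⟩
  refine ⟨(Multiplicative (ZMod q) ⋊[ψ] Multiplicative (ZMod p)) × Multiplicative (ZMod m),
    inferInstance, @instFintypeProd _ _ (Fintype.ofEquiv _ (sdpEquiv ψ).symm) inferInstance,
    ?_, ?_⟩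
  · rw [@Fintype.card_prod _ _ (Fintype.ofEquiv _ (sdpEquiv ψ).symm) _]
    rw [@Fintype.card_congr _ _ (Fintype.ofEquiv _ (sdpEquiv ψ).symm) _ (sdpEquiv ψ)]
    rw [Fintype.card_prod]
    simp only [Fintype.card_multiplicative, ZMod.card]
    rw [← hm]; ring
  · intro h
    letI := h.commGroup
    have := mul_comm
      ((SemidirectProduct.inl (Multiplicative.ofAdd (1 : ZMod q)), 1) :
        (Multiplicative (ZMod q) ⋊[ψ] Multiplicative (ZMod p)) × Multiplicative (ZMod m))
      ((SemidirectProduct.inr (Multiplicative.ofAdd (1 : ZMod p)), 1))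
    have h1 := congrArg (fun z => z.1.left) this
    simp only [Prod.mk_mul_mk, SemidirectProduct.mul_left, SemidirectProduct.left_inl,
      SemidirectProduct.right_inl, SemidirectProduct.left_inr, SemidirectProduct.right_inr,
      map_one, MulAut.one_apply, mul_one, one_mul] at h1
    rw [hψ1] at h1
    have h3 : (1 : ZMod q) = u • (1 : ZMod q) := congrArg Multiplicative.toAdd h1
    rw [Units.smul_def, smul_eq_mul, mul_one] at h3
    have hu1 : u ≠ 1 := by
      intro huu
      rw [huu, orderOf_one] at hu
      exact hp.one_lt.ne' hu.symm
    exact hu1 (Units.ext h3.symm)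
end

section
/- Let G be a group, f, h ∈ G, k an integer, and q a positive integer. If h⁻¹·f·h = f^k and h^q belongs to the subgroup ⟨f⟩ of all integer powers of f, then f^(k^q) = f. -/
/-- Let `G` be a group, `f, h ∈ G`, `k` an integer, and `q` a positive integer.
If `h⁻¹ * f * h = f ^ k` and `h ^ q` belongs to the subgroup `⟨f⟩` of all integer
powers of `f`, then `f ^ (k ^ q) = f`. -/
theorem zpow_pow_eq_self_of_conj {G : Type*} [Group G] (f h : G) (k : ℤ) (q : ℕ)
    (hq : 0 < q) (hconj : h⁻¹ * f * h = f ^ k) (hmem : h ^ q ∈ Subgroup.zpowers f) :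
    f ^ (k ^ q) = f := by
  have key : ∀ n : ℕ, (h ^ n)⁻¹ * f * h ^ n = f ^ (k ^ n) := by
    intro n
    induction n with
    | zero => simp
    | succ n ih =>
      have : (h ^ (n+1))⁻¹ * f * h ^ (n+1) = h⁻¹ * ((h ^ n)⁻¹ * f * h ^ n) * h := by
        rw [pow_succ]
        group
      rw [this, ih]
      have hc : ∀ m : ℤ, h⁻¹ * f ^ m * h = (f ^ k) ^ m := by
        intro m
        simpa [hconj] using (conj_zpow (a := h⁻¹) (b := f) (i := m)).symm
      rw [hc, ← zpow_mul, pow_succ, mul_comm k (k^n : ℤ)]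
  obtain ⟨m, hm⟩ := hmem
  have := key q
  simp only at hm
  rw [← hm] at this
  have comm : f ^ m * f = f * f ^ m := by
    rw [← zpow_one_add, ← zpow_add_one, add_comm]
  rw [← this, mul_assoc, ← comm, ← mul_assoc, inv_mul_cancel, one_mul]
end

section
/- Let G be a finite group, f, h ∈ G, k an integer, and q a positive integer such that h⁻¹·f·h = f^k, h^q belongs to the subgroup ⟨f⟩ of all integer powers of f, and q is coprime to φ(orderOf f). Then f·h = h·f. -/
/-- Let `G` be a finite group, `f, h ∈ G`, `k` an integer, and `q` a positive integer such
that `h⁻¹ * f * h = f ^ k`, `h ^ q ∈ ⟨f⟩`, and `q` is coprime to `φ(orderOf f)`.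
Then `f * h = h * f`. -/
theorem commute_of_conj_zpow {G : Type*} [Group G] [Fintype G] (f h : G) (k : ℤ) (q : ℕ)
    (hq : 0 < q) (hconj : h⁻¹ * f * h = f ^ k) (hmem : h ^ q ∈ Subgroup.zpowers f)
    (hcop : Nat.Coprime q (Nat.totient (orderOf f))) :
    f * h = h * f := by
  set n := orderOf f with hn
  have hnpos : 0 < n := orderOf_pos f
  haveI : NeZero n := ⟨hnpos.ne'⟩
  -- iterated conjugation
  have conj_pow : ∀ m : ℕ, (h ^ m)⁻¹ * f * h ^ m = f ^ (k ^ m) := by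
    intro m
    induction m with
    | zero => simp
    | succ m ih =>
      have : (h ^ (m + 1))⁻¹ * f * h ^ (m + 1)
          = h⁻¹ * ((h ^ m)⁻¹ * f * h ^ m) * h := by
        rw [pow_succ, mul_inv_rev]
        group
      rw [this, ih]
      have : (h⁻¹ * f * h) ^ (k ^ m) = h⁻¹ * f ^ (k ^ m) * h := by
        have := conj_zpow (i := k ^ m) (a := h⁻¹) (b := f)
        simpa using this
      rw [← this, hconj, ← zpow_mul, pow_succ, mul_comm]
  -- h^q commutes with f
  obtain ⟨m, hm⟩ := hmem
  have hm' : f ^ m = h ^ q := hm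
  have hcomm : f * h ^ q = h ^ q * f := by
    rw [← hm']; exact ((Commute.refl f).zpow_right m).eq
  have hfix : (h ^ q)⁻¹ * f * h ^ q = f := by
    rw [mul_assoc, hcomm, ← mul_assoc, inv_mul_cancel, one_mul]
  have hkey : f ^ (k ^ q) = f ^ (1 : ℤ) := by
    rw [← conj_pow q, hfix, zpow_one]
  have hmod : k ^ q ≡ 1 [ZMOD n] := by
    have := (zpow_eq_zpow_iff_modEq (x := f)).mp hkey
    exact this
  have hz : (k : ZMod n) ^ q = 1 := by
    have : ((k ^ q : ℤ) : ZMod n) = ((1 : ℤ) : ZMod n) :=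
      (ZMod.intCast_eq_intCast_iff' _ _ _).mpr hmod
    push_cast at this
    exact this
  have hu : IsUnit (k : ZMod n) := IsUnit.of_pow_eq_one hz hq.ne'
  have huq : hu.unit ^ q = 1 := by
    ext
    push_cast
    exact hz
  have h1 : orderOf hu.unit ∣ q := orderOf_dvd_of_pow_eq_one huq
  have h2 : orderOf hu.unit ∣ Nat.totient n := by
    rw [← ZMod.card_units_eq_totient n]
    exact orderOf_dvd_card
  have h3 : orderOf hu.unit = 1 := Nat.eq_one_of_dvd_coprimes hcop h1 h2
  have hk1 : (k : ZMod n) = 1 := by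
    have := orderOf_eq_one_iff.mp h3
    have : (hu.unit : ZMod n) = 1 := by rw [this]; rfl
    rwa [IsUnit.unit_spec] at this
  have : f ^ k = f ^ (1 : ℤ) := by
    rw [zpow_eq_zpow_iff_modEq]
    exact (ZMod.intCast_eq_intCast_iff' _ _ _).mp (by push_cast; exact hk1)
  rw [this, zpow_one] at hconj
  calc f * h = h * (h⁻¹ * f * h) := by group
    _ = h * f := by rw [hconj]
end

section
/- Let G be a finite group and f, h ∈ G with f·h = h·f. Let q be the least positive integer n such that h^n ∈ ⟨f⟩. Then the subgroup of G generated by f and h has exactly q · (orderOf f) elements. -/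
/-- Let `G` be a finite group and `f, h ∈ G` with `f * h = h * f`. Let `q` be the least
positive integer `n` such that `h ^ n ∈ ⟨f⟩`. Then the subgroup of `G` generated by
`f` and `h` has exactly `q * orderOf f` elements. -/
theorem card_closure_pair_eq {G : Type*} [Group G] [Fintype G] (f h : G)
    (hcomm : f * h = h * f)
    (q : ℕ) (hq_pos : 0 < q) (hq_mem : h ^ q ∈ Subgroup.zpowers f)
    (hq_min : ∀ m : ℕ, 0 < m → h ^ m ∈ Subgroup.zpowers f → q ≤ m) :
    Nat.card (Subgroup.closure ({f, h} : Set G)) = q * orderOf f := by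
  classical
  have hc : Commute f h := hcomm
  set r := orderOf f with hr
  have hrpos : 0 < r := orderOf_pos f
  -- every element of the closure is f^m * h^n for integers m n
  have mem1 : ∀ g ∈ Subgroup.closure ({f, h} : Set G), ∃ m n : ℤ, g = f ^ m * h ^ n := by
    intro g hg
    induction hg using Subgroup.closure_induction with
    | mem x hx =>
      rcases hx with hx | hx
      · exact ⟨1, 0, by simp [hx]⟩
      · exact ⟨0, 1, by simp [Set.mem_singleton_iff.1 hx]⟩
    | one => exact ⟨0, 0, by simp⟩
    | mul x y _ _ hx hy =>
      obtain ⟨m, n, rfl⟩ := hx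
      obtain ⟨m', n', rfl⟩ := hy
      refine ⟨m + m', n + n', ?_⟩
      have hcc : h ^ n * f ^ m' = f ^ m' * h ^ n := ((hc.symm).zpow_zpow n m')
      rw [zpow_add, zpow_add]
      calc f ^ m * h ^ n * (f ^ m' * h ^ n')
          = f ^ m * (h ^ n * f ^ m') * h ^ n' := by group
        _ = f ^ m * (f ^ m' * h ^ n) * h ^ n' := by rw [hcc]
        _ = f ^ m * f ^ m' * (h ^ n * h ^ n') := by group
    | inv x _ hx =>
      obtain ⟨m, n, rfl⟩ := hx
      refine ⟨-m, -n, ?_⟩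
      have hcc : h ^ (-n) * f ^ (-m) = f ^ (-m) * h ^ (-n) := ((hc.symm).zpow_zpow (-n) (-m))
      rw [mul_inv_rev, ← zpow_neg, ← zpow_neg, hcc]
  obtain ⟨k, hk⟩ := hq_mem
  simp only at hk
  -- normal form
  have mem2 : ∀ g ∈ Subgroup.closure ({f, h} : Set G),
      ∃ p : ℕ × ℕ, p ∈ Finset.range q ×ˢ Finset.range r ∧ g = h ^ p.1 * f ^ p.2 := by
    intro g hg
    obtain ⟨m, n, rfl⟩ := mem1 g hg
    have hq0 : (q : ℤ) ≠ 0 := by exact_mod_cast hq_pos.ne'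
    have hb0 : 0 ≤ n % q := Int.emod_nonneg n hq0
    have hblt : n % q < q := Int.emod_lt_of_pos n (by exact_mod_cast hq_pos)
    set b : ℕ := (n % q).toNat with hbdef
    have hbn : (b : ℤ) = n % q := Int.toNat_of_nonneg hb0
    have hn : n = q * (n / q) + b := by rw [hbn]; exact (Int.mul_ediv_add_emod n q).symm
    have hhn : h ^ n = f ^ (k * (n / q)) * h ^ (b : ℤ) := by
      have h2 : h ^ ((q : ℤ) * (n / q)) = f ^ (k * (n / q)) := by
        rw [zpow_mul, zpow_mul, zpow_natCast, hk]
      conv_lhs => rw [hn]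
      rw [zpow_add, h2]
    set M : ℤ := m + k * (n / q) with hM
    have h1 : f ^ m * h ^ n = h ^ (b : ℤ) * f ^ M := by
      rw [hhn, ← mul_assoc, ← zpow_add, hM, ((hc.symm).zpow_zpow (b:ℤ) M)]
    set a : ℕ := (M % r).toNat with hadef
    have hr0 : 0 < (r : ℤ) := by exact_mod_cast hrpos
    have ha0 : 0 ≤ M % r := Int.emod_nonneg M hr0.ne'
    have hfM : f ^ M = f ^ a := by
      have h3 : f ^ ((a : ℤ)) = f ^ M := by
        rw [hadef, Int.toNat_of_nonneg ha0]
        exact zpow_mod_orderOf f M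
      rw [← h3, zpow_natCast]
    refine ⟨(b, a), ?_, ?_⟩
    · simp only [Finset.mem_product, Finset.mem_range]
      constructor
      · exact_mod_cast hbn ▸ hblt
      · have halt : M % r < r := Int.emod_lt_of_pos M hr0
        have : (a : ℤ) < r := by rw [hadef, Int.toNat_of_nonneg ha0]; exact halt
        exact_mod_cast this
    · rw [h1, hfM]; simp [zpow_natCast]
  -- injectivity
  have hinj : Set.InjOn (fun p : ℕ × ℕ => h ^ p.1 * f ^ p.2)
      ↑(Finset.range q ×ˢ Finset.range r) := by
    rintro ⟨b1, a1⟩ hp1 ⟨b2, a2⟩ hp2 heq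
    simp only [Finset.coe_product, Set.mem_prod, Finset.mem_coe, Finset.mem_range] at hp1 hp2
    simp only at heq
    have key : ∀ b1 b2 a1 a2 : ℕ, b1 < q → b2 < q → b2 ≤ b1 →
        h ^ b1 * f ^ a1 = h ^ b2 * f ^ a2 → b1 = b2 := by
      intro b1 b2 a1 a2 hb1 hb2 hle heq
      by_contra hne
      have hpos : 0 < b1 - b2 := Nat.sub_pos_of_lt (lt_of_le_of_ne hle (Ne.symm hne))
      have hmem : h ^ (b1 - b2) ∈ Subgroup.zpowers f := by
        have h4 : h ^ (b1 - b2) = f ^ a2 * (f ^ a1)⁻¹ := by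
          have hsplit : h ^ b1 = h ^ b2 * h ^ (b1 - b2) := by
            rw [← pow_add, Nat.add_sub_cancel' hle]
          rw [hsplit, mul_assoc] at heq
          have := mul_left_cancel heq
          rw [← this]; group
        rw [h4, ← zpow_natCast f a2, ← zpow_natCast f a1, ← zpow_neg, ← zpow_add]
        exact ⟨_, rfl⟩
      have := hq_min _ hpos hmem
      omega
    have hb : b1 = b2 := by
      rcases le_total b2 b1 with hle | hle
      · exact key b1 b2 a1 a2 hp1.1 hp2.1 hle heq
      · exact (key b2 b1 a2 a1 hp2.1 hp1.1 hle heq.symm).symm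
    subst hb
    have ha : f ^ a1 = f ^ a2 := mul_left_cancel heq
    have : a1 = a2 := pow_injOn_Iio_orderOf (Set.mem_Iio.2 hp1.2) (Set.mem_Iio.2 hp2.2) ha
    simp [this]
  -- the closure equals the image finset
  have hset : (Subgroup.closure ({f, h} : Set G) : Set G) =
      ↑((Finset.range q ×ˢ Finset.range r).image (fun p : ℕ × ℕ => h ^ p.1 * f ^ p.2)) := by
    ext g
    simp only [Finset.coe_image, Set.mem_image, Finset.mem_coe]
    constructor
    · intro hg
      obtain ⟨p, hp, rfl⟩ := mem2 g hg
      exact ⟨p, hp, rfl⟩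
    · rintro ⟨p, _, rfl⟩
      have hf : f ∈ Subgroup.closure ({f, h} : Set G) :=
        Subgroup.subset_closure (by simp)
      have hh : h ∈ Subgroup.closure ({f, h} : Set G) :=
        Subgroup.subset_closure (by simp)
      exact mul_mem (pow_mem hh _) (pow_mem hf _)
  calc Nat.card (Subgroup.closure ({f, h} : Set G))
      = (Subgroup.closure ({f, h} : Set G) : Set G).ncard := by
        rw [← Nat.card_coe_set_eq]; rfl
    _ = ((((Finset.range q ×ˢ Finset.range r).image
          (fun p : ℕ × ℕ => h ^ p.1 * f ^ p.2)) : Finset G) : Set G).ncard := by rw [hset]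
    _ = ((Finset.range q ×ˢ Finset.range r).image
          (fun p : ℕ × ℕ => h ^ p.1 * f ^ p.2)).card := Set.ncard_coe_finset _
    _ = q * r := by
        rw [Finset.card_image_of_injOn hinj, Finset.card_product,
          Finset.card_range, Finset.card_range]
end

section
/- Let G be a finite group such that the number of elements of G is coprime to φ of the number of elements of G. Suppose some maximal subgroup F of G is of the form F = ⟨f⟩, and every conjugate b⁻¹·f·b of f (b ∈ G) is an integer power of f. Then G is cyclic. -/
/-- A maximal subgroup of a group `G`: a subgroup that is maximal by inclusion among
subgroups of `G` that are proper (`≠ ⊤`) and nontrivial (contain more than one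
element, i.e. `≠ ⊥`). -/
def IsMaximalSubgroup {G : Type*} [Group G] (F : Subgroup G) : Prop :=
  F ≠ ⊤ ∧ F ≠ ⊥ ∧ ∀ K : Subgroup G, K ≠ ⊤ → K ≠ ⊥ → F ≤ K → F = K

/-- Let `G` be a finite group such that `|G|` is coprime to `φ(|G|)`. Suppose some
maximal subgroup `F` of `G` is of the form `F = ⟨f⟩`, and every conjugate `b⁻¹ * f * b`
of `f` is an integer power of `f`. Then `G` is cyclic. -/
theorem isCyclic_of_maximal_zpowers_conj_mem {G : Type*} [Group G] [Fintype G]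
    (hcop : Nat.Coprime (Fintype.card G) (Nat.totient (Fintype.card G)))
    (f : G) (hmax : IsMaximalSubgroup (Subgroup.zpowers f))
    (hconj : ∀ b : G, b⁻¹ * f * b ∈ Subgroup.zpowers f) :
    IsCyclic G := by
  obtain ⟨hNtop, hNbot, hmaxi⟩ := hmax
  set N := Subgroup.zpowers f with hNdef
  -- N is normal
  have hnorm : N.Normal := by
    constructor
    intro x hx g
    obtain ⟨k, rfl⟩ := hx
    have h1 : g * f * g⁻¹ ∈ N := by simpa using hconj g⁻¹
    have : g * f ^ k * g⁻¹ = (g * f * g⁻¹) ^ k := conj_zpow.symm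
    rw [show g * f ^ k * g⁻¹ = (g * f * g⁻¹) ^ k from conj_zpow.symm]
    exact Subgroup.zpow_mem _ h1 k
  -- f is central
  have hcentral : ∀ b : G, b * f * b⁻¹ = f := by
    intro b
    haveI : IsCyclic N := ⟨⟨⟨f, Subgroup.mem_zpowers f⟩, fun x => by
      obtain ⟨y, k, hk⟩ := x
      exact ⟨k, Subtype.ext (by simpa using hk)⟩⟩⟩
    have h1 : orderOf (MulAut.conjNormal (H := N) b) ∣ Fintype.card G :=
      (orderOf_map_dvd _ b).trans (orderOf_dvd_card)
    have h2 : orderOf (MulAut.conjNormal (H := N) b) ∣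
        Nat.totient (Fintype.card G) := by
      have ha : orderOf (MulAut.conjNormal (H := N) b) ∣ Nat.card (MulAut N) :=
        orderOf_dvd_natCard _
      rw [IsCyclic.card_mulAut] at ha
      refine ha.trans (Nat.totient_dvd_of_dvd ?_)
      simpa [Nat.card_eq_fintype_card] using Subgroup.card_subgroup_dvd_card N
    have h3 : orderOf (MulAut.conjNormal (H := N) b) = 1 :=
      Nat.eq_one_of_dvd_coprimes hcop h1 h2
    have h4 : MulAut.conjNormal (H := N) b = 1 := orderOf_eq_one_iff.mp h3
    have := congrArg (fun σ : MulAut N => (σ ⟨f, Subgroup.mem_zpowers f⟩ : G)) h4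
    simpa [MulAut.conjNormal_apply] using this
  -- the quotient has prime order
  set Q := G ⧸ N with hQdef
  have hcardG : Fintype.card G = Nat.card Q * Nat.card N := by
    rw [← Nat.card_eq_fintype_card]
    exact Subgroup.card_eq_card_quotient_mul_card_subgroup N
  have hQne : Nat.card Q ≠ 1 := by
    intro h
    apply hNtop
    rw [h, one_mul] at hcardG
    exact Subgroup.eq_top_of_card_eq N (by rw [← hcardG, Nat.card_eq_fintype_card])
  obtain ⟨p, hp, hpdvd⟩ := Nat.exists_prime_and_dvd hQne
  haveI : Fact p.Prime := ⟨hp⟩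
  obtain ⟨x, hx⟩ := exists_prime_orderOf_dvd_card' (G := Q) p hpdvd
  -- zpowers x pulls back to a subgroup containing N
  have hxne : x ≠ 1 := by
    intro h; rw [h, orderOf_one] at hx; exact hp.ne_one hx.symm
  have hcomap : Subgroup.comap (QuotientGroup.mk' N) (Subgroup.zpowers x) = ⊤ := by
    by_contra htop
    have hle : N ≤ Subgroup.comap (QuotientGroup.mk' N) (Subgroup.zpowers x) := by
      intro y hy
      simp only [Subgroup.mem_comap]
      have : QuotientGroup.mk' N y = 1 := by
        rw [← QuotientGroup.ker_mk' N] at hy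
        exact hy
      rw [this]; exact Subgroup.one_mem _
    have hbot : Subgroup.comap (QuotientGroup.mk' N) (Subgroup.zpowers x) ≠ ⊥ := by
      intro h
      exact hNbot (le_bot_iff.mp (h ▸ hle))
    have heq := hmaxi _ htop hbot hle
    have : Subgroup.zpowers x = ⊥ := by
      have hsurj : Function.Surjective (QuotientGroup.mk' N) :=
        QuotientGroup.mk'_surjective N
      have := congrArg (Subgroup.map (QuotientGroup.mk' N)) heq
      rw [Subgroup.map_comap_eq_self_of_surjective hsurj] at this
      rw [← this]
      rw [eq_bot_iff]
      intro y hy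
      obtain ⟨z, hz, rfl⟩ := hy
      have : QuotientGroup.mk' N z = 1 := (QuotientGroup.eq_one_iff z).mpr hz
      simp [this]
    exact hxne (by simpa [Subgroup.zpowers_eq_bot] using this)
  have hQcard : Nat.card Q = p := by
    have : Subgroup.zpowers x = ⊤ := by
      rw [eq_top_iff]
      intro y _
      obtain ⟨z, rfl⟩ := QuotientGroup.mk'_surjective N y
      have hz : z ∈ Subgroup.comap (QuotientGroup.mk' N) (Subgroup.zpowers x) :=
        hcomap ▸ Subgroup.mem_top z
      exact hz
    rw [← hx, ← Nat.card_zpowers, this, Subgroup.card_top]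
  -- p is coprime to |N|
  have hpN : ¬ p ∣ Nat.card N := by
    intro hdvd
    have hp2 : p ^ 2 ∣ Fintype.card G := by
      rw [hcardG, pow_two]
      exact mul_dvd_mul (hQcard ▸ dvd_rfl) hdvd
    have h1 : p ∣ Nat.totient (Fintype.card G) := by
      have := Nat.totient_dvd_of_dvd hp2
      rw [Nat.totient_prime_pow hp (by norm_num)] at this
      exact dvd_trans ⟨p - 1, by ring_nf⟩ this
    have h2 : p ∣ Fintype.card G := dvd_trans (dvd_pow_self p (by norm_num)) hp2
    exact hp.ne_one (Nat.eq_one_of_dvd_coprimes hcop h2 h1)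
  -- get an element of order p in G and multiply
  obtain ⟨g, hg⟩ := exists_prime_orderOf_dvd_card (G := G) p (by
    rw [hcardG, hQcard]; exact dvd_mul_right p _)
  have hcomm : Commute f g := by
    have := hcentral g
    have : g * f = f * g := by
      have h := hcentral g
      calc g * f = (g * f * g⁻¹) * g := by group
        _ = f * g := by rw [h]
    exact this.symm
  have hordf : orderOf f = Nat.card N := (Nat.card_zpowers f).symm
  have hcopr : Nat.Coprime (orderOf f) (orderOf g) := by
    rw [hordf, hg]
    exact ((Nat.Prime.coprime_iff_not_dvd hp).mpr hpN).symm
  have horder : orderOf (f * g) = Fintype.card G := by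
    rw [Commute.orderOf_mul_eq_mul_orderOf_of_coprime hcomm hcopr, hordf, hg,
      hcardG, hQcard, mul_comm]
  exact isCyclic_of_orderOf_eq_card (f * g) (by rw [Nat.card_eq_fintype_card]; exact horder)
end

section
/- Let G be a non-commutative group and F₁, F₂ two distinct maximal subgroups of G, each of which is commutative (any two of its elements commute). Then F₁ ∩ F₂ equals the center of G. -/
open scoped Pointwise


/-- The center is contained in any maximal abelian subgroup (given `G` noncommutative). -/
lemma center_le_of_maximal_comm {G : Type*} [Group G]
    (hG : ¬ ∀ a b : G, a * b = b * a) (F : Subgroup G)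
    (hmax : IsMaximalSubgroup F)
    (hF : ∀ a b : G, a ∈ F → b ∈ F → a * b = b * a) :
    Subgroup.center G ≤ F := by
  obtain ⟨hFtop, hFbot, hFmax⟩ := hmax
  set K := F ⊔ Subgroup.center G with hK
  have hFleK : F ≤ K := le_sup_left
  have hKbot : K ≠ ⊥ := fun h => hFbot (le_bot_iff.mp (h ▸ hFleK))
  have hKtop : K ≠ ⊤ := by
    intro htop
    apply hG
    intro a b
    have ha : a ∈ K := htop ▸ Subgroup.mem_top a
    have hb : b ∈ K := htop ▸ Subgroup.mem_top b
    rw [hK] at ha hb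
    have hmul : ((F ⊔ Subgroup.center G : Subgroup G) : Set G) = (F : Set G) * (Subgroup.center G : Set G) :=
      Subgroup.mul_normal F (Subgroup.center G)
    have ha' : a ∈ ((F : Set G) * (Subgroup.center G : Set G)) := hmul ▸ ha
    have hb' : b ∈ ((F : Set G) * (Subgroup.center G : Set G)) := hmul ▸ hb
    obtain ⟨f₁, hf₁, z₁, hz₁, rfl⟩ := ha'
    obtain ⟨f₂, hf₂, z₂, hz₂, rfl⟩ := hb'
    have c₁ := (Subgroup.mem_center_iff.mp hz₁)
    have c₂ := (Subgroup.mem_center_iff.mp hz₂)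
    have cf := hF f₁ f₂ hf₁ hf₂
    calc f₁ * z₁ * (f₂ * z₂) = f₁ * f₂ * (z₁ * z₂) := by
          rw [mul_assoc, mul_assoc, ← mul_assoc z₁, ← c₁ f₂, mul_assoc]
      _ = f₂ * f₁ * (z₂ * z₁) := by
          rw [cf, c₂ z₁]
      _ = f₂ * z₂ * (f₁ * z₁) := by
          rw [mul_assoc, mul_assoc, ← mul_assoc f₁, c₂ f₁, mul_assoc]
  have := hFmax K hKtop hKbot hFleK
  rw [this]
  exact le_sup_right

/-- Let `G` be a non-commutative group and `F₁, F₂` two distinct maximal subgroups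
of `G`, each of which is commutative. Then `F₁ ∩ F₂` equals the center of `G`. -/
theorem inf_of_distinct_maximal_comm_eq_center {G : Type*} [Group G]
    (hG : ¬ ∀ a b : G, a * b = b * a)
    (F₁ F₂ : Subgroup G) (hne : F₁ ≠ F₂)
    (hmax₁ : IsMaximalSubgroup F₁) (hmax₂ : IsMaximalSubgroup F₂)
    (hF₁ : ∀ a b : G, a ∈ F₁ → b ∈ F₁ → a * b = b * a)
    (hF₂ : ∀ a b : G, a ∈ F₂ → b ∈ F₂ → a * b = b * a) :
    F₁ ⊓ F₂ = Subgroup.center G := by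
  have hsup : F₁ ⊔ F₂ = ⊤ := by
    by_contra h
    have hbot : F₁ ⊔ F₂ ≠ ⊥ := fun hb =>
      hmax₁.2.1 (le_bot_iff.mp (hb ▸ (le_sup_left : F₁ ≤ F₁ ⊔ F₂)))
    have h1 := hmax₁.2.2 _ h hbot le_sup_left
    have h2le : F₂ ≤ F₁ := h1 ▸ (le_sup_right : F₂ ≤ F₁ ⊔ F₂)
    exact hne ((hmax₂.2.2 F₁ hmax₁.1 hmax₁.2.1 h2le).symm)
  apply le_antisymm
  · intro x hx
    have hx₁ : x ∈ F₁ := hx.1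
    have hx₂ : x ∈ F₂ := hx.2
    rw [Subgroup.mem_center_iff]
    intro g
    have hg : g ∈ F₁ ⊔ F₂ := hsup ▸ Subgroup.mem_top g
    have hle : F₁ ⊔ F₂ ≤ Subgroup.centralizer {x} := by
      apply sup_le
      · intro a ha
        rw [Subgroup.mem_centralizer_iff]
        intro h hh
        simp only [Set.mem_singleton_iff] at hh
        subst hh
        exact hF₁ _ a hx₁ ha
      · intro a ha
        rw [Subgroup.mem_centralizer_iff]
        intro h hh
        simp only [Set.mem_singleton_iff] at hh
        subst hh
        exact hF₂ _ a hx₂ ha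
    have := hle hg
    rw [Subgroup.mem_centralizer_iff] at this
    exact (this x rfl).symm
  · exact le_inf (center_le_of_maximal_comm hG F₁ hmax₁ hF₁)
      (center_le_of_maximal_comm hG F₂ hmax₂ hF₂)
end

section
/- Let G be a finite group and F a subgroup of G such that the normalizer of F equals F, the center Z of G is contained in F, and for every g ∈ G, if g·F·g⁻¹ ≠ F then (g·F·g⁻¹) ∩ F = Z. Then the number of elements of G that lie in some conjugate of F but not in Z equals (|F| − |Z|) · (|G| / |F|). -/
open Pointwise

private lemma conj_smul_eq_iff_mem_normalizer' {G : Type*} [Group G] (F : Subgroup G) (x : G) :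
    MulAut.conj x • F = F ↔ x ∈ Subgroup.normalizer (F : Set G) := by
  rw [Subgroup.mem_normalizer_iff, SetLike.ext_iff]
  simp only [Subgroup.mem_smul_pointwise_iff_exists, MulAut.smul_def, MulAut.conj_apply]
  constructor
  · intro h y
    constructor
    · intro hy
      exact (h (x * y * x⁻¹)).1 ⟨y, hy, rfl⟩
    · intro hy
      obtain ⟨s, hs, heq⟩ := (h (x * y * x⁻¹)).2 hy
      have : s = y := mul_left_cancel (mul_right_cancel heq)
      exact this ▸ hs
  · intro h y
    constructor
    · rintro ⟨s, hs, rfl⟩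
      exact (h s).1 hs
    · intro hy
      refine ⟨x⁻¹ * y * x, (h _).2 ?_, by group⟩
      have : x * (x⁻¹ * y * x) * x⁻¹ = y := by group
      rwa [this]

/-- Let `G` be a finite group and `F` a subgroup of `G` such that the normalizer of `F`
equals `F`, the center `Z` of `G` is contained in `F`, and for every `g ∈ G`, if
`g·F·g⁻¹ ≠ F` then `(g·F·g⁻¹) ∩ F = Z`. Then the number of elements of `G` lying in some
conjugate of `F` but not in `Z` equals `(|F| - |Z|) * (|G| / |F|)`. -/
theorem card_union_conjugates_sdiff_center {G : Type*} [Group G] [Fintype G]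
    (F : Subgroup G)
    (hnorm : Subgroup.normalizer (F : Set G) = F)
    (hZle : Subgroup.center G ≤ F)
    (hint : ∀ g : G, Subgroup.map (MulAut.conj g).toMonoidHom F ≠ F →
      Subgroup.map (MulAut.conj g).toMonoidHom F ⊓ F = Subgroup.center G) :
    Nat.card
        ((⋃ g : G, ((Subgroup.map (MulAut.conj g).toMonoidHom F : Subgroup G) : Set G)) \
          (Subgroup.center G : Set G) : Set G) =
      (Nat.card F - Nat.card (Subgroup.center G)) * (Nat.card G / Nat.card F) := by
  classical
  set Z := Subgroup.center G with hZdef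
  set k : G → Subgroup G := fun g => MulAut.conj g • F with hk
  have hmap : ∀ g : G, Subgroup.map (MulAut.conj g).toMonoidHom F = k g := fun _ => rfl
  -- key equivalence
  have hiff : ∀ g h : G, k g = k h ↔ h⁻¹ * g ∈ F := by
    intro g h
    rw [← hnorm, ← conj_smul_eq_iff_mem_normalizer' F, map_mul, map_inv, mul_smul,
      inv_smul_eq_iff]
  -- Z ≤ each conjugate
  have hZle' : ∀ g : G, Z ≤ k g := by
    intro g
    calc Z = MulAut.conj g • Z := (Subgroup.Normal.conj_smul_eq_self g Z).symm
    _ ≤ k g := Subgroup.pointwise_smul_le_pointwise_smul_iff.2 hZle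
  -- card of each conjugate
  have hcard : ∀ g : G, Nat.card (k g) = Nat.card F := fun g =>
    Nat.card_congr (Subgroup.equivMapOfInjective F (MulAut.conj g).toMonoidHom
      (MulAut.conj g).injective).symm.toEquiv
  -- pairwise intersections
  have hdisj : ∀ g h : G, k g ≠ k h → k g ⊓ k h = Z := by
    intro g h hne
    have h1 : MulAut.conj (h⁻¹ * g) • F ≠ F := fun hEq =>
      hne ((hiff g h).2 (hnorm ▸ (conj_smul_eq_iff_mem_normalizer' F _).1 hEq))
    have h2 : k (h⁻¹ * g) ⊓ F = Z := by
      rw [← hmap]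
      exact hint _ (by rw [hmap]; exact h1)
    calc k g ⊓ k h = MulAut.conj h • (k (h⁻¹ * g) ⊓ F) := by
          rw [Subgroup.smul_inf]
          show MulAut.conj g • F ⊓ MulAut.conj h • F =
            MulAut.conj h • (MulAut.conj (h⁻¹ * g) • F) ⊓ MulAut.conj h • F
          rw [← mul_smul, ← map_mul, mul_inv_cancel_left]
      _ = MulAut.conj h • Z := by rw [h2]
      _ = Z := Subgroup.Normal.conj_smul_eq_self h Z
  -- finset setup
  set T : Finset (Subgroup G) := Finset.univ.image k with hT
  set part : Subgroup G → Finset G := fun H => Finset.univ.filter (fun x => x ∈ H ∧ x ∉ Z)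
    with hpart
  have hsetrw : ((⋃ g : G, ((Subgroup.map (MulAut.conj g).toMonoidHom F : Subgroup G) : Set G))
      \ (Z : Set G) : Set G) = ↑(T.biUnion part) := by
    ext x
    simp only [Set.mem_diff, Set.mem_iUnion, SetLike.mem_coe, Finset.coe_biUnion,
      Finset.mem_coe, Finset.mem_biUnion, hT, Finset.mem_image, Finset.mem_univ, true_and,
      hpart, Finset.mem_filter, hmap]
    constructor
    · rintro ⟨⟨g, hg⟩, hz⟩
      exact ⟨k g, ⟨g, rfl⟩, hg, hz⟩
    · rintro ⟨H, ⟨g, rfl⟩, hg, hz⟩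
      exact ⟨⟨g, hg⟩, hz⟩
  rw [hsetrw, Nat.card_coe_set_eq, Set.ncard_coe_finset]
  have hpd : ∀ H ∈ T, ∀ K ∈ T, H ≠ K → Disjoint (part H) (part K) := by
    rintro H hH K hK hne
    simp only [hT, Finset.mem_image, Finset.mem_univ, true_and] at hH hK
    obtain ⟨g, rfl⟩ := hH
    obtain ⟨h, rfl⟩ := hK
    rw [Finset.disjoint_left]
    rintro x hx hx'
    simp only [hpart, Finset.mem_filter, Finset.mem_univ, true_and] at hx hx'
    have : x ∈ k g ⊓ k h := ⟨hx.1, hx'.1⟩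
    rw [hdisj g h hne] at this
    exact hx.2 this
  rw [Finset.card_biUnion hpd]
  have hpartcard : ∀ H ∈ T, (part H).card = Nat.card F - Nat.card Z := by
    intro H hH
    simp only [hT, Finset.mem_image, Finset.mem_univ, true_and] at hH
    obtain ⟨g, rfl⟩ := hH
    have hsub : Finset.univ.filter (fun x => x ∈ Z) ⊆ Finset.univ.filter (fun x => x ∈ k g) :=
      fun x hx => by
        simp only [Finset.mem_filter, Finset.mem_univ, true_and] at hx ⊢
        exact hZle' g hx
    have : part (k g) = Finset.univ.filter (fun x => x ∈ k g) \
        Finset.univ.filter (fun x => x ∈ Z) := by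
      ext x
      simp only [hpart, Finset.mem_filter, Finset.mem_sdiff, Finset.mem_univ, true_and]
    have cH : (Finset.univ.filter (fun x => x ∈ k g)).card = Nat.card F := by
      rw [← hcard g, Nat.card_eq_fintype_card, Fintype.card_subtype]
    have cZ : (Finset.univ.filter (fun x => x ∈ Z)).card = Nat.card Z := by
      rw [Nat.card_eq_fintype_card, Fintype.card_subtype]
    rw [this, Finset.card_sdiff_of_subset hsub, cH, cZ]
  rw [Finset.sum_congr rfl hpartcard, Finset.sum_const, smul_eq_mul]
  -- count conjugates: T.card = |G| / |F|
  have hTcard : T.card = Nat.card G / Nat.card F := by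
    have e1 : Nat.card (G ⧸ F) * Nat.card F = Nat.card G :=
      (Subgroup.card_eq_card_quotient_mul_card_subgroup F).symm
    have hFpos : 0 < Nat.card F := Nat.card_pos
    have h1 : T.card = Nat.card (Set.range k) := by
      rw [Nat.card_coe_set_eq, ← Set.ncard_coe_finset T]
      congr 1
      simp [hT]
    have h2 : Nat.card (G ⧸ F) = Nat.card (Set.range k) := by
      apply Nat.card_congr
      refine (Quotient.congrRight (fun a b => ?_)).trans (Setoid.quotientKerEquivRange k)
      rw [QuotientGroup.leftRel_apply, Setoid.ker_def]
      exact ⟨fun hm => ((hiff b a).2 hm).symm, fun e => (hiff b a).1 e.symm⟩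
    rw [h1, ← h2, ← e1, Nat.mul_div_cancel _ hFpos]
  rw [hTcard, mul_comm]
end

section
/- There is no finite non-commutative group G in which every maximal subgroup is commutative and every maximal subgroup equals its own normalizer. -/
open scoped Pointwise
open MulAction

section Aux
variable {G : Type} [Group G] [Fintype G]

omit [Fintype G] in
lemma aux_smul_top (m : ConjAct G) : m • (⊤ : Subgroup G) = ⊤ := by
  ext x; simp [Subgroup.mem_pointwise_smul_iff_inv_smul_mem]

omit [Fintype G] in
lemma aux_key_norm (M : Subgroup G) (m : ConjAct G) :
    m • M = M ↔ ConjAct.ofConjAct m ∈ Subgroup.normalizer (M : Set G) := by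
  rw [Subgroup.mem_normalizer_iff]
  constructor
  · intro h x
    constructor
    · intro hx
      have : m • x ∈ m • M := Subgroup.smul_mem_pointwise_smul _ _ _ hx
      rwa [h, ConjAct.smul_def] at this
    · intro hx
      have h1 : m • x ∈ M := by rwa [ConjAct.smul_def]
      rw [← h] at h1
      exact Subgroup.smul_mem_pointwise_smul_iff.mp h1
  · intro h
    ext x
    rw [Subgroup.mem_pointwise_smul_iff_inv_smul_mem, ConjAct.smul_def, map_inv]
    have h2 := h ((ConjAct.ofConjAct m)⁻¹ * x * (ConjAct.ofConjAct m)⁻¹⁻¹)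
    have e : ConjAct.ofConjAct m * ((ConjAct.ofConjAct m)⁻¹ * x * (ConjAct.ofConjAct m)⁻¹⁻¹) *
        (ConjAct.ofConjAct m)⁻¹ = x := by group
    rw [e] at h2
    exact h2

omit [Fintype G] in
lemma aux_isMax_smul {M : Subgroup G} (m : ConjAct G) (h : IsMaximalSubgroup M) :
    IsMaximalSubgroup (m • M) := by
  obtain ⟨h1, h2, h3⟩ := h
  refine ⟨?_, ?_, ?_⟩
  · intro hc
    apply h1
    have := congrArg (fun K => m⁻¹ • K) hc
    simpa [inv_smul_smul, aux_smul_top] using this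
  · intro hc
    apply h2
    have := congrArg (fun K => m⁻¹ • K) hc
    simpa [inv_smul_smul] using this
  · intro K hKt hKb hle
    have hle' : M ≤ m⁻¹ • K := by
      rwa [← Subgroup.pointwise_smul_subset_iff]
    have hKt' : m⁻¹ • K ≠ ⊤ := by
      intro hc
      apply hKt
      have := congrArg (fun K => m • K) hc
      simpa [smul_inv_smul, aux_smul_top] using this
    have hKb' : m⁻¹ • K ≠ ⊥ := by
      intro hc
      apply hKb
      have := congrArg (fun K => m • K) hc
      simpa [smul_inv_smul] using this
    have := h3 _ hKt' hKb' hle'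
    rw [this, smul_inv_smul]

omit [Fintype G] in
lemma aux_card_smul (m : ConjAct G) (M : Subgroup G) :
    Nat.card (m • M : Subgroup G) = Nat.card M :=
  (Nat.card_congr (Subgroup.equivSMul m M).toEquiv).symm

lemma aux_orbit_card (M : Subgroup G) :
    Nat.card (orbit (ConjAct G) M) * Nat.card (Subgroup.normalizer (M : Set G)) = Nat.card G := by
  classical
  have hstab : stabilizer (ConjAct G) M =
      (Subgroup.normalizer (M : Set G)).map (ConjAct.toConjAct : G ≃* ConjAct G).toMonoidHom := by
    ext m
    rw [mem_stabilizer_iff, Subgroup.mem_map_equiv]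
    exact aux_key_norm M m
  have hcards : Nat.card (stabilizer (ConjAct G) M) = Nat.card (Subgroup.normalizer (M : Set G)) := by
    rw [hstab]
    exact (Nat.card_congr (Subgroup.equivMapOfInjective _ _ (MulEquiv.injective _)).toEquiv).symm
  letI : Fintype (ConjAct G) := ‹Fintype G›
  letI : Fintype (orbit (ConjAct G) M) := (Set.toFinite _).fintype
  letI : Fintype (stabilizer (ConjAct G) M) := Fintype.ofFinite _
  have h1 := MulAction.card_orbit_mul_card_stabilizer_eq_card_group (ConjAct G) M
  have h2 : Nat.card (orbit (ConjAct G) M) * Nat.card (stabilizer (ConjAct G) M)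
      = Nat.card (ConjAct G) := by
    simpa [Nat.card_eq_fintype_card] using h1
  rw [← hcards, h2]
  exact Nat.card_congr ConjAct.ofConjAct.toEquiv

end Aux

/-- There is no finite non-commutative group `G` in which every maximal subgroup is
commutative and every maximal subgroup equals its own normalizer. -/
theorem no_finite_noncomm_group_with_comm_selfnormalizing_maximals :
    ¬ ∃ (G : Type) (_ : Group G) (_ : Fintype G),
        (¬ ∀ a b : G, a * b = b * a) ∧
        (∀ F : Subgroup G, IsMaximalSubgroup F →
          (∀ a b : G, a ∈ F → b ∈ F → a * b = b * a) ∧ Subgroup.normalizer (F : Set G) = F) := by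
  rintro ⟨G, _, _, hnc, hmax⟩
  classical
  set Z := Subgroup.center G with hZdef
  have habel : ∀ F, IsMaximalSubgroup F → ∀ a b : G, a ∈ F → b ∈ F → a * b = b * a :=
    fun F hF => (hmax F hF).1
  have hnorm : ∀ F : Subgroup G, IsMaximalSubgroup F → Subgroup.normalizer (F : Set G) = F :=
    fun F hF => (hmax F hF).2
  have hZle : ∀ F : Subgroup G, IsMaximalSubgroup F → Z ≤ F :=
    fun F hF => (hnorm F hF) ▸ Subgroup.center_le_normalizer (F : Set G)
  -- existence of maximal subgroups containing any nontrivial element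
  have hexists : ∀ g : G, g ≠ 1 → ∃ M : Subgroup G, IsMaximalSubgroup M ∧ g ∈ M := by
    intro g hg
    have hbot : Subgroup.zpowers g ≠ ⊥ := by
      simpa [Subgroup.zpowers_eq_bot] using hg
    have htop : Subgroup.zpowers g ≠ ⊤ := by
      intro h
      apply hnc
      intro a b
      have ha : a ∈ Subgroup.zpowers g := h ▸ Subgroup.mem_top a
      have hb : b ∈ Subgroup.zpowers g := h ▸ Subgroup.mem_top b
      obtain ⟨m, rfl⟩ := ha
      obtain ⟨n, rfl⟩ := hb
      exact zpow_mul_comm g m n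
    set S : Set (Subgroup G) := {K | K ≠ ⊤ ∧ K ≠ ⊥ ∧ g ∈ K} with hSdef
    have hSne : S.Nonempty := ⟨Subgroup.zpowers g, htop, hbot, Subgroup.mem_zpowers g⟩
    obtain ⟨M, hMS, hMmax⟩ := Set.Finite.exists_maximalFor
      (fun K : Subgroup G => Nat.card K) S (Set.toFinite S) hSne
    refine ⟨M, ⟨hMS.1, hMS.2.1, ?_⟩, hMS.2.2⟩
    intro K hKt hKb hle
    have hKS : K ∈ S := ⟨hKt, hKb, hle hMS.2.2⟩
    have hcard := hMmax hKS (Subgroup.card_le_of_le hle)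
    exact Subgroup.eq_of_le_of_card_ge hle hcard
  -- distinct maximal subgroups intersect inside the center
  have hint : ∀ M N : Subgroup G, IsMaximalSubgroup M → IsMaximalSubgroup N → M ≠ N →
      ∀ x : G, x ∈ M → x ∈ N → x ∈ Z := by
    intro M N hM hN hMN x hxM hxN
    rcases eq_or_ne x 1 with rfl | hx1
    · exact Z.one_mem
    set C := Subgroup.centralizer ({x} : Set G) with hCdef
    have hMC : M ≤ C := by
      intro a ha
      rw [Subgroup.mem_centralizer_iff]
      rintro y rfl
      exact habel M hM y a hxM ha
    have hNC : N ≤ C := by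
      intro a ha
      rw [Subgroup.mem_centralizer_iff]
      rintro y rfl
      exact habel N hN y a hxN ha
    have hCb : C ≠ ⊥ := by
      intro h
      apply hx1
      have : x ∈ C := by
        rw [Subgroup.mem_centralizer_iff]
        rintro y rfl
        rfl
      rwa [h, Subgroup.mem_bot] at this
    by_cases hCt : C = ⊤
    · rw [hZdef, Subgroup.mem_center_iff]
      intro gg
      have : gg ∈ C := hCt ▸ Subgroup.mem_top gg
      rw [Subgroup.mem_centralizer_iff] at this
      exact (this x rfl).symm
    · exfalso
      apply hMN
      rw [hM.2.2 C hCt hCb hMC, hN.2.2 C hCt hCb hNC]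
  -- the center is strictly inside every maximal subgroup (index ≥ 2)
  have hZM : ∀ M : Subgroup G, IsMaximalSubgroup M → 2 * Nat.card Z ≤ Nat.card M := by
    intro M hM
    have hle : Z ≤ M := hZle M hM
    have hne : Z ≠ M := by
      intro h
      apply hM.1
      have : Subgroup.normalizer (Z : Set G) = ⊤ := Subgroup.normalizer_eq_top_iff.2 (by infer_instance : (Subgroup.center G).Normal)
      rw [h] at this
      rw [← hnorm M hM, this]
    have hdvd : Nat.card Z ∣ Nat.card M := Subgroup.card_dvd_of_le hle
    have hlt : Nat.card Z < Nat.card M := by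
      rcases lt_or_ge (Nat.card Z) (Nat.card M) with h | h
      · exact h
      · exact absurd (Subgroup.eq_of_le_of_card_ge hle h) hne
    obtain ⟨k, hk⟩ := hdvd
    have hZpos : 0 < Nat.card Z := Nat.card_pos
    have hk2 : 2 ≤ k := by
      rcases Nat.lt_or_ge k 2 with h | h
      · interval_cases k <;> omega
      · exact h
    calc 2 * Nat.card Z = Nat.card Z * 2 := by ring
      _ ≤ Nat.card Z * k := Nat.mul_le_mul_left _ hk2
      _ = Nat.card M := hk.symm
  -- counting machinery
  set n := Nat.card G with hndef
  let Mfin : Subgroup G → Finset G := fun H => Finset.univ.filter (fun x => x ∈ H)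
  have hMfin_card : ∀ H : Subgroup G, (Mfin H).card = Nat.card H := by
    intro H
    have he : Mfin H = (H : Set G).toFinset := by
      ext x; simp [Mfin]
    rw [he, Set.toFinset_card, ← Nat.card_eq_fintype_card]
    rfl
  have hZcard : (Mfin Z).card = Nat.card Z := hMfin_card Z
  let Fs : Subgroup G → Finset G := fun M => Finset.univ.filter (fun x => x ∈ M ∧ x ∉ Z)
  have hFs_card : ∀ M : Subgroup G, IsMaximalSubgroup M →
      (Fs M).card + Nat.card Z = Nat.card M := by
    intro M hM
    have hsub : Mfin Z ⊆ Mfin M := by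
      intro x hx
      simp only [Mfin, Finset.mem_filter, Finset.mem_univ, true_and] at *
      exact hZle M hM hx
    have he : Fs M = Mfin M \ Mfin Z := by
      ext x; simp [Fs, Mfin]
    rw [he, ← hMfin_card M, ← hMfin_card Z, Finset.card_sdiff_add_card_eq_card hsub]
  have hdisj : ∀ s : Finset (Subgroup G), (∀ M ∈ s, IsMaximalSubgroup M) →
      ∀ M ∈ s, ∀ N ∈ s, M ≠ N → Disjoint (Fs M) (Fs N) := by
    intro s hs M hMs N hNs hMN
    rw [Finset.disjoint_left]
    intro x hxM hxN
    simp only [Fs, Finset.mem_filter, Finset.mem_univ, true_and] at hxM hxN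
    exact hxM.2 (hint M N (hs M hMs) (hs N hNs) hMN x hxM.1 hxN.1)
  have hZdisjU : ∀ s : Finset (Subgroup G), Disjoint (Mfin Z) (s.biUnion Fs) := by
    intro s
    rw [Finset.disjoint_left]
    intro x hx hx2
    rw [Finset.mem_biUnion] at hx2
    obtain ⟨M, hMs, hxM⟩ := hx2
    simp only [Fs, Finset.mem_filter, Finset.mem_univ, true_and] at hxM
    simp only [Mfin, Finset.mem_filter, Finset.mem_univ, true_and] at hx
    exact hxM.2 hx
  have hbound : ∀ s : Finset (Subgroup G), (∀ M ∈ s, IsMaximalSubgroup M) →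
      Nat.card Z + ∑ M ∈ s, (Fs M).card ≤ n := by
    intro s hs
    rw [← Finset.card_biUnion (hdisj s hs)]
    calc Nat.card Z + (s.biUnion Fs).card
        = (Mfin Z ∪ s.biUnion Fs).card := by
          rw [Finset.card_union_of_disjoint (hZdisjU s), hZcard]
      _ ≤ Finset.univ.card := Finset.card_le_card (Finset.subset_univ _)
      _ = n := by rw [Finset.card_univ, hndef, Nat.card_eq_fintype_card]
  let orbF : Subgroup G → Finset (Subgroup G) :=
    fun M => (Set.toFinite (orbit (ConjAct G) M)).toFinset
  have horbF_mem : ∀ M N : Subgroup G, N ∈ orbF M ↔ N ∈ orbit (ConjAct G) M :=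
    fun M N => Set.Finite.mem_toFinset _
  have horbF_max : ∀ M, IsMaximalSubgroup M → ∀ N ∈ orbF M, IsMaximalSubgroup N := by
    intro M hM N hN
    rw [horbF_mem] at hN
    obtain ⟨m, rfl⟩ := hN
    exact aux_isMax_smul m hM
  have hpack : ∀ M : Subgroup G, IsMaximalSubgroup M →
      ∃ a : ℕ, (∑ N ∈ orbF M, (Fs N).card) + a = n ∧ 2 * Nat.card Z ≤ a ∧ 2 * a ≤ n := by
    intro M hM
    set r := Nat.card (orbit (ConjAct G) M) with hrdef
    have horb : r * Nat.card M = n := by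
      have h := aux_orbit_card M
      rwa [hnorm M hM] at h
    have hcardeq : ∀ N ∈ orbF M, (Fs N).card + Nat.card Z = Nat.card M := by
      intro N hN
      have hNmax := horbF_max M hM N hN
      rw [horbF_mem] at hN
      obtain ⟨m, rfl⟩ := hN
      rw [hFs_card _ hNmax, aux_card_smul]
    have hrcard : (orbF M).card = r := by
      rw [hrdef, Nat.card_coe_set_eq,
        Set.ncard_eq_toFinset_card _ (Set.toFinite (orbit (ConjAct G) M))]
    have hMc := hZM M hM
    have hsum : (∑ N ∈ orbF M, (Fs N).card) = r * (Nat.card M - Nat.card Z) := by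
      have h : ∀ N ∈ orbF M, (Fs N).card = Nat.card M - Nat.card Z := by
        intro N hN; have := hcardeq N hN; omega
      rw [Finset.sum_congr rfl h, Finset.sum_const, hrcard, smul_eq_mul]
    have hZpos : 0 < Nat.card Z := Nat.card_pos
    refine ⟨r * Nat.card Z, ?_, ?_, ?_⟩
    · obtain ⟨d, hd⟩ := Nat.exists_eq_add_of_le (le_trans (by omega : Nat.card Z ≤ 2 * Nat.card Z) hMc)
      rw [hsum, hd]
      have h2 : Nat.card Z + d - Nat.card Z = d := by omega
      rw [h2, ← horb, hd]
      ring
    · have hr2 : 2 ≤ r := by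
        have hnpos : 0 < n := by rw [hndef]; exact Nat.card_pos
        have hrpos : r ≠ 0 := by
          intro h; rw [h, zero_mul] at horb; omega
        have hr1 : r ≠ 1 := by
          intro h
          rw [h, one_mul] at horb
          exact hM.1 (Subgroup.eq_top_of_le_card M (le_of_eq horb.symm))
        omega
      exact Nat.mul_le_mul_right _ hr2
    · calc 2 * (r * Nat.card Z) = r * (2 * Nat.card Z) := by ring
        _ ≤ r * Nat.card M := Nat.mul_le_mul_left _ hMc
        _ = n := horb
  -- endgame
  have hone : ∃ g : G, g ≠ 1 := by
    by_contra h
    push_neg at h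
    exact hnc (fun a b => by rw [h a, h b])
  obtain ⟨g0, hg0⟩ := hone
  obtain ⟨M₀, hM₀, -⟩ := hexists g0 hg0
  obtain ⟨a₁, ha₁, ha₁Z, ha₁n⟩ := hpack M₀ hM₀
  have hZpos : 0 < Nat.card Z := Nat.card_pos
  by_cases hall : ∀ N : Subgroup G, IsMaximalSubgroup N → N ∈ orbit (ConjAct G) M₀
  · have hcover : Mfin Z ∪ (orbF M₀).biUnion Fs = Finset.univ := by
      apply Finset.eq_univ_of_forall
      intro x
      rw [Finset.mem_union]
      by_cases hxZ : x ∈ Z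
      · left; simp [Mfin, hxZ]
      · right
        have hx1 : x ≠ 1 := by rintro rfl; exact hxZ Z.one_mem
        obtain ⟨M, hM, hxM⟩ := hexists x hx1
        rw [Finset.mem_biUnion]
        exact ⟨M, (horbF_mem M₀ M).2 (hall M hM), by simp [Fs, hxM, hxZ]⟩
    have heq : Nat.card Z + ∑ N ∈ orbF M₀, (Fs N).card = n := by
      rw [← Finset.card_biUnion (hdisj _ (horbF_max M₀ hM₀)), ← hZcard,
        ← Finset.card_union_of_disjoint (hZdisjU _), hcover, Finset.card_univ,
        hndef, Nat.card_eq_fintype_card]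
    omega
  · push_neg at hall
    obtain ⟨N₀, hN₀, hN₀nO⟩ := hall
    obtain ⟨a₂, ha₂, ha₂Z, ha₂n⟩ := hpack N₀ hN₀
    have hOdisj : Disjoint (orbF M₀) (orbF N₀) := by
      rw [Finset.disjoint_left]
      intro K hK1 hK2
      rw [horbF_mem] at hK1 hK2
      have e1 := (orbit_eq_iff (G := ConjAct G)).2 hK1
      have e2 := (orbit_eq_iff (G := ConjAct G)).2 hK2
      apply hN₀nO
      rw [← e1, e2]
      exact mem_orbit_self N₀
    have hb := hbound (orbF M₀ ∪ orbF N₀) ?_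
    · rw [Finset.sum_union hOdisj] at hb
      omega
    · intro M hM
      rw [Finset.mem_union] at hM
      rcases hM with h | h
      · exact horbF_max M₀ hM₀ M h
      · exact horbF_max N₀ hN₀ M h
end
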